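/- arXiv:1910.05111 — 8 statements merged into one kernel-verified Lean document; each statement's English description precedes it below -/
import Mathlib

section
/- If {φⱼ} is a sequence of holomorphic functions mapping the open unit disk 𝔻 to itself such that ∑ⱼ supₓ∈𝔻 |φⱼ(z) − z| < ∞, then the sequence of inner compositions Φₙ(z) = φ₁(φ₂(...φₙ(z))) converges uniformly on compact subsets of 𝔻 to a holomorphic function Φ : 𝔻 → 𝔻̄ (closure of 𝔻). -/
open Complex Metric Filter Topology

/-- Inner composition: `innerComp φ n = φ 0 ∘ φ 1 ∘ ... ∘ φ (n-1)`,
built recursively by `Φ_{n+1}(z) = Φ_n (φ_n z)`. -/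
def innerComp (φ : ℕ → ℂ → ℂ) : ℕ → ℂ → ℂ
  | 0 => id
  | (n + 1) => fun z => innerComp φ n (φ n z)

lemma innerComp_mapsTo (φ : ℕ → ℂ → ℂ)
    (hmaps : ∀ j, Set.MapsTo (φ j) (ball (0 : ℂ) 1) (ball (0 : ℂ) 1)) :
    ∀ n, Set.MapsTo (innerComp φ n) (ball (0 : ℂ) 1) (ball (0 : ℂ) 1) := by
  intro n
  induction n with
  | zero => exact fun z hz => hz
  | succ n ih => exact fun z hz => ih (hmaps n hz)

lemma innerComp_diff (φ : ℕ → ℂ → ℂ)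
    (hmaps : ∀ j, Set.MapsTo (φ j) (ball (0 : ℂ) 1) (ball (0 : ℂ) 1))
    (hdiff : ∀ j, DifferentiableOn ℂ (φ j) (ball (0 : ℂ) 1)) :
    ∀ n, DifferentiableOn ℂ (innerComp φ n) (ball (0 : ℂ) 1) := by
  intro n
  induction n with
  | zero => exact differentiableOn_id
  | succ n ih => exact ih.comp (hdiff n) (hmaps n)

theorem stmt_0 (φ : ℕ → ℂ → ℂ)
    (hmaps : ∀ j, Set.MapsTo (φ j) (ball (0 : ℂ) 1) (ball (0 : ℂ) 1))
    (hdiff : ∀ j, DifferentiableOn ℂ (φ j) (ball (0 : ℂ) 1))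
    (c : ℕ → ℝ) (hc : Summable c)
    (hb : ∀ j, ∀ z ∈ ball (0 : ℂ) 1, ‖φ j z - z‖ ≤ c j) :
    ∃ Φ : ℂ → ℂ,
      TendstoLocallyUniformlyOn (fun n => innerComp φ n) Φ atTop (ball (0 : ℂ) 1) ∧
      DifferentiableOn ℂ Φ (ball (0 : ℂ) 1) ∧
      Set.MapsTo Φ (ball (0 : ℂ) 1) (closedBall (0 : ℂ) 1) := by
  have hc0 : ∀ j, 0 ≤ c j := by
    intro j
    calc (0:ℝ) ≤ ‖φ j 0 - 0‖ := norm_nonneg _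
    _ ≤ c j := hb j 0 (by simp)
  -- the per-step bound on closed balls of radius r < 1
  have step : ∀ r : ℝ, 0 ≤ r → r < 1 → ∀ n, ∀ z ∈ closedBall (0:ℂ) r,
      ‖innerComp φ (n+1) z - innerComp φ n z‖ ≤ min 2 (2/(1-r) * c n) := by
    intro r hr0 hr1 n z hz
    have hz1 : z ∈ ball (0:ℂ) 1 := by
      rw [mem_ball, dist_zero_right]
      exact lt_of_le_of_lt (by simpa [dist_zero_right] using hz) hr1
    have hφz : φ n z ∈ ball (0:ℂ) 1 := hmaps n hz1
    have h2 : ‖innerComp φ (n+1) z - innerComp φ n z‖ ≤ 2 := by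
      have ha := innerComp_mapsTo φ hmaps n hφz
      have hb' := innerComp_mapsTo φ hmaps n hz1
      rw [mem_ball, dist_zero_right] at ha hb'
      have he : innerComp φ (n+1) z = innerComp φ n (φ n z) := rfl
      rw [he]
      calc ‖innerComp φ n (φ n z) - innerComp φ n z‖
          ≤ ‖innerComp φ n (φ n z)‖ + ‖innerComp φ n z‖ :=
            norm_sub_le (innerComp φ n (φ n z)) (innerComp φ n z)
      _ ≤ 2 := by linarith
    rcases lt_or_ge (c n) (1 - r) with hcase | hcase
    · refine le_min h2 ?_
      have hsub : ball z (1-r) ⊆ ball (0:ℂ) 1 := by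
        intro x hx
        rw [mem_ball, dist_zero_right]
        rw [mem_ball] at hx
        calc ‖x‖ = ‖(x - z) + z‖ := by ring_nf
        _ ≤ ‖x - z‖ + ‖z‖ := norm_add_le _ _
        _ < (1 - r) + r := by
            have : ‖z‖ ≤ r := by simpa [dist_zero_right] using hz
            have : ‖x - z‖ < 1 - r := by simpa [dist_eq_norm] using hx
            linarith [show ‖z‖ ≤ r by simpa [dist_zero_right] using hz]
        _ = 1 := by ring
      have hd : DifferentiableOn ℂ (innerComp φ n) (ball z (1-r)) :=
        (innerComp_diff φ hmaps hdiff n).mono hsub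
      have hm : Set.MapsTo (innerComp φ n) (ball z (1-r))
          (ball (innerComp φ n z) 2) := by
        intro x hx
        have hx1 := innerComp_mapsTo φ hmaps n (hsub hx)
        have hz1' := innerComp_mapsTo φ hmaps n hz1
        rw [mem_ball, dist_zero_right] at hx1 hz1'
        rw [mem_ball, dist_eq_norm]
        calc ‖innerComp φ n x - innerComp φ n z‖
            ≤ ‖innerComp φ n x‖ + ‖innerComp φ n z‖ := norm_sub_le _ _
        _ < 2 := by linarith
      have hzin : φ n z ∈ ball z (1-r) := by
        rw [mem_ball, dist_eq_norm]
        exact lt_of_le_of_lt (hb n z hz1) hcase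
      have := Complex.dist_le_div_mul_dist_of_mapsTo_ball hd (hm.mono_right ball_subset_closedBall) hzin
      rw [dist_eq_norm, dist_eq_norm] at this
      calc ‖innerComp φ (n+1) z - innerComp φ n z‖
          = ‖innerComp φ n (φ n z) - innerComp φ n z‖ := by simp [innerComp]
      _ ≤ 2/(1-r) * ‖φ n z - z‖ := this
      _ ≤ 2/(1-r) * c n := by
          have : (0:ℝ) < 1 - r := by linarith
          exact mul_le_mul_of_nonneg_left (hb n z hz1) (by positivity)
    · have hmin : min 2 (2/(1-r) * c n) = 2 := by
        refine min_eq_left ?_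
        have h1r : (0:ℝ) < 1 - r := by linarith
        rw [div_mul_eq_mul_div, le_div_iff₀ h1r]
        nlinarith
      rw [hmin]; exact h2
  -- the limit function
  set Φ : ℂ → ℂ := fun z => z + ∑' n, (innerComp φ (n+1) z - innerComp φ n z) with hΦ
  -- uniform convergence on each closed ball of radius r < 1
  have key : ∀ r : ℝ, 0 ≤ r → r < 1 →
      TendstoUniformlyOn (fun n => innerComp φ n) Φ atTop (closedBall (0:ℂ) r) := by
    intro r hr0 hr1
    have hu : Summable (fun n => min 2 (2/(1-r) * c n)) := by
      refine Summable.of_nonneg_of_le (fun n => le_min (by norm_num) ?_)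
        (fun n => min_le_right _ _) (hc.mul_left _)
      have h1r : (0:ℝ) < 1 - r := by linarith
      exact mul_nonneg (by positivity) (hc0 n)
    have hts := tendstoUniformlyOn_tsum_nat hu
      (f := fun n z => innerComp φ (n+1) z - innerComp φ n z)
      (s := closedBall (0:ℂ) r) (fun n z hz => step r hr0 hr1 n z hz)
    have hps : ∀ N (z : ℂ), ∑ n ∈ Finset.range N,
        (innerComp φ (n+1) z - innerComp φ n z) = innerComp φ N z - z := by
      intro N z
      simpa [show innerComp φ 0 z = z from rfl] using Finset.sum_range_sub (fun n => innerComp φ n z) N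
    have hid : TendstoUniformlyOn (fun _ : ℕ => fun z : ℂ => z) (fun z => z)
        atTop (closedBall (0:ℂ) r) := by
      intro v hv
      filter_upwards with n z _
      exact mem_uniformity_of_eq hv rfl
    have hadd := hid.add hts
    refine hadd.congr ?_ |>.congr_right ?_
    · filter_upwards with N
      intro z hz
      simp only [Pi.add_apply]
      rw [hps N z]
      ring
    · intro z hz
      simp only [Pi.add_apply, hΦ]
  -- locally uniform convergence on the unit ball
  have hlu : TendstoLocallyUniformlyOn (fun n => innerComp φ n) Φ atTop (ball (0:ℂ) 1) := by
    rw [tendstoLocallyUniformlyOn_iff_forall_isCompact isOpen_ball]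
    intro K hK hKc
    rcases K.eq_empty_or_nonempty with rfl | hne
    · simp [TendstoUniformlyOn]
    · obtain ⟨x, hxK, hx⟩ := hKc.exists_isMaxOn hne continuous_norm.continuousOn
      have hr1 : ‖x‖ < 1 := by simpa [mem_ball, dist_zero_right] using hK hxK
      exact (key ‖x‖ (norm_nonneg x) hr1).mono
        (fun z hz => by simpa [mem_closedBall, dist_zero_right] using hx hz)
  refine ⟨Φ, hlu, ?_, ?_⟩
  · exact hlu.differentiableOn
      (Eventually.of_forall (fun n => innerComp_diff φ hmaps hdiff n)) isOpen_ball
  · intro z hz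
    have htend : Tendsto (fun n => innerComp φ n z) atTop (𝓝 (Φ z)) := by
      have := hlu.tendsto_at hz
      simpa using this
    rw [mem_closedBall, dist_zero_right]
    refine le_of_tendsto (htend.norm) ?_
    filter_upwards with n
    have := innerComp_mapsTo φ hmaps n hz
    rw [mem_ball, dist_zero_right] at this
    exact this.le
end

section
/- Let {φⱼ} be holomorphic functions mapping an open set G ⊆ ℂ to itself such that for every compact disk K ⊂ G, ∑ⱼ supₓ∈K |φⱼ(z) − z| < ∞. Then the inner compositions Φₙ(z) = φ₁(φ₂(...φₙ(z))) converge uniformly on compact subsets of G, and the limit Φ is holomorphic on G with values in the closure of G. -/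
open Complex Metric Filter Topology

/-- Tail composition: `tailComp φ n k = φ n ∘ φ (n+1) ∘ ... ∘ φ (n+k-1)`. -/
def tailComp (φ : ℕ → ℂ → ℂ) (n : ℕ) : ℕ → ℂ → ℂ
  | 0 => id
  | (k + 1) => fun z => tailComp φ n k (φ (n + k) z)

lemma innerComp_add (φ : ℕ → ℂ → ℂ) (n k : ℕ) :
    ∀ z, innerComp φ (n + k) z = innerComp φ n (tailComp φ n k z) := by
  induction k with
  | zero => intro z; rfl
  | succ k ih =>
    intro z
    show innerComp φ (n + k) (φ (n + k) z) = _
    rw [ih]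
    rfl

lemma tailComp_add (φ : ℕ → ℂ → ℂ) (n k l : ℕ) :
    ∀ z, tailComp φ n (k + l) z = tailComp φ n k (tailComp φ (n + k) l z) := by
  induction l with
  | zero => intro z; rfl
  | succ l ih =>
    intro z
    show tailComp φ n (k + l) (φ (n + (k + l)) z)
      = tailComp φ n k (tailComp φ (n + k) l (φ ((n + k) + l) z))
    rw [ih, Nat.add_assoc]

lemma tailComp_succ' (φ : ℕ → ℂ → ℂ) :
    ∀ k n z, tailComp φ n (k + 1) z = φ n (tailComp φ (n + 1) k z) := by
  intro k
  induction k with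
  | zero => intro n z; rfl
  | succ k ih =>
    intro n z
    show tailComp φ n (k + 1) (φ (n + (k + 1)) z)
      = φ n (tailComp φ (n + 1) k (φ ((n + 1) + k) z))
    rw [ih n]
    have : n + (k + 1) = (n + 1) + k := by omega
    rw [this]

lemma tailComp_prop {G : Set ℂ} (φ : ℕ → ℂ → ℂ)
    (hmaps : ∀ j, Set.MapsTo (φ j) G G) (hdiff : ∀ j, DifferentiableOn ℂ (φ j) G) :
    ∀ k n, Set.MapsTo (tailComp φ n k) G G ∧ DifferentiableOn ℂ (tailComp φ n k) G := by
  intro k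
  induction k with
  | zero => intro n; exact ⟨Set.mapsTo_id G, differentiableOn_id⟩
  | succ k ih =>
    intro n
    exact ⟨(ih n).1.comp (hmaps (n + k)),
      DifferentiableOn.comp (ih n).2 (hdiff (n + k)) (hmaps (n + k))⟩

lemma innerComp_prop {G : Set ℂ} (φ : ℕ → ℂ → ℂ)
    (hmaps : ∀ j, Set.MapsTo (φ j) G G) (hdiff : ∀ j, DifferentiableOn ℂ (φ j) G) :
    ∀ n, Set.MapsTo (innerComp φ n) G G ∧ DifferentiableOn ℂ (innerComp φ n) G := by
  intro n
  induction n with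
  | zero => exact ⟨Set.mapsTo_id G, differentiableOn_id⟩
  | succ n ih =>
    exact ⟨ih.1.comp (hmaps n), DifferentiableOn.comp ih.2 (hdiff n) (hmaps n)⟩

lemma exists_bound (G : Set ℂ) (hG : IsOpen G) (φ : ℕ → ℂ → ℂ)
    (hsum : ∀ (z₀ : ℂ) (r : ℝ), closedBall z₀ r ⊆ G →
      ∃ c : ℕ → ℝ, Summable c ∧ ∀ j, ∀ z ∈ closedBall z₀ r, ‖φ j z - z‖ ≤ c j)
    (K : Set ℂ) (hK : IsCompact K) (hKG : K ⊆ G) :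
    ∃ c : ℕ → ℝ, Summable c ∧ (∀ j, 0 ≤ c j) ∧ ∀ j, ∀ z ∈ K, ‖φ j z - z‖ ≤ c j := by
  have hr : ∀ x : K, ∃ r, 0 < r ∧ closedBall (x : ℂ) r ⊆ G := by
    intro x
    rcases Metric.isOpen_iff.1 hG x (hKG x.2) with ⟨r, hr0, hrb⟩
    exact ⟨r / 2, by positivity, (closedBall_subset_ball (by linarith)).trans hrb⟩
  choose r hr0 hrG using hr
  choose c hcs hcb using fun x : K => hsum x (r x) (hrG x)
  rcases hK.elim_finite_subcover (fun x : K => ball (x : ℂ) (r x)) (fun _ => isOpen_ball)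
      (fun z hz => Set.mem_iUnion.2 ⟨⟨z, hz⟩, mem_ball_self (hr0 _)⟩) with ⟨t, ht⟩
  refine ⟨fun j => ∑ x ∈ t, |c x j|, ?_, ?_, ?_⟩
  · exact summable_sum (fun x _ => (hcs x).abs)
  · intro j; positivity
  · intro j z hz
    rcases Set.mem_iUnion₂.1 (ht hz) with ⟨x, hxt, hxz⟩
    calc ‖φ j z - z‖ ≤ c x j := hcb x j z (ball_subset_closedBall hxz)
      _ ≤ |c x j| := le_abs_self _
      _ ≤ ∑ x ∈ t, |c x j| := Finset.single_le_sum (f := fun x => |c x j|) (fun y _ => abs_nonneg _) hxt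

lemma ico_le_tail (c : ℕ → ℝ) (hc : Summable c) (h0 : ∀ j, 0 ≤ c j) {N n m : ℕ} (hn : N ≤ n) :
    ∑ j ∈ Finset.Ico n m, c j ≤ ∑' k, c (k + N) := by
  have hsum' : Summable (fun k => c (k + N)) := (summable_nat_add_iff N).2 hc
  calc ∑ j ∈ Finset.Ico n m, c j ≤ ∑ j ∈ Finset.Ico N (max m N), c j := by
        apply Finset.sum_le_sum_of_subset_of_nonneg
        · intro j hj
          simp only [Finset.mem_Ico] at hj ⊢
          omega
        · intro j _ _; exact h0 j
    _ = ∑ i ∈ Finset.range (max m N - N), c (N + i) := Finset.sum_Ico_eq_sum_range _ _ _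
    _ = ∑ i ∈ Finset.range (max m N - N), c (i + N) := by
        apply Finset.sum_congr rfl; intro i _; rw [Nat.add_comm]
    _ ≤ ∑' k, c (k + N) := Summable.sum_le_tsum _ (fun i _ => h0 _) hsum'

lemma orbit_est (φ : ℕ → ℂ → ℂ) (K₂ : Set ℂ)
    (c : ℕ → ℝ) (hc : Summable c) (h0 : ∀ j, 0 ≤ c j)
    (hbd : ∀ j, ∀ z ∈ K₂, ‖φ j z - z‖ ≤ c j) (N : ℕ) :
    ∀ k n, N ≤ n → ∀ w : ℂ, closedBall w (∑' i, c (i + N)) ⊆ K₂ →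
      ‖tailComp φ n k w - w‖ ≤ ∑ j ∈ Finset.Ico n (n + k), c j := by
  intro k
  induction k with
  | zero => intro n hn w hw; simp [tailComp]
  | succ k ih =>
    intro n hn w hw
    rw [tailComp_succ']
    set v := tailComp φ (n + 1) k w with hv
    have h1 : ‖v - w‖ ≤ ∑ j ∈ Finset.Ico (n + 1) ((n + 1) + k), c j := ih (n + 1) (by omega) w hw
    have hvK : v ∈ K₂ := hw (by
      rw [mem_closedBall, dist_eq_norm]
      exact h1.trans (ico_le_tail c hc h0 (by omega)))
    have h2 : ‖φ n v - v‖ ≤ c n := hbd n v hvK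
    have htri : ‖φ n v - w‖ ≤ ‖φ n v - v‖ + ‖v - w‖ := norm_sub_le_norm_sub_add_norm_sub _ _ _
    have hsum : ∑ j ∈ Finset.Ico n (n + (k + 1)), c j
        = c n + ∑ j ∈ Finset.Ico (n + 1) ((n + 1) + k), c j := by
      have h3 : (n + 1) + k = n + (k + 1) := by omega
      rw [h3, Finset.sum_eq_sum_Ico_succ_bot (by omega)]
    rw [hsum]
    linarith
theorem stmt_2 (G : Set ℂ) (hG : IsOpen G) (φ : ℕ → ℂ → ℂ)
    (hmaps : ∀ j, Set.MapsTo (φ j) G G)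
    (hdiff : ∀ j, DifferentiableOn ℂ (φ j) G)
    (hsum : ∀ (z₀ : ℂ) (r : ℝ), closedBall z₀ r ⊆ G →
      ∃ c : ℕ → ℝ, Summable c ∧ ∀ j, ∀ z ∈ closedBall z₀ r, ‖φ j z - z‖ ≤ c j) :
    ∃ Φ : ℂ → ℂ,
      TendstoLocallyUniformlyOn (fun n => innerComp φ n) Φ atTop G ∧
      DifferentiableOn ℂ Φ G ∧
      Set.MapsTo Φ G (closure G) := by
  -- Core claim: uniform Cauchy on every compact subset of G
  have hKey : ∀ K : Set ℂ, K ⊆ G → IsCompact K →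
      UniformCauchySeqOn (fun n => innerComp φ n) atTop K := by
    intro K hKG hK
    obtain ⟨δ, hδ0, hδG⟩ := hK.exists_cthickening_subset_open hG hKG
    set ε := δ / 3 with hε
    have hε0 : 0 < ε := by positivity
    set K₂ := cthickening δ K with hK₂def
    have hK₂ : IsCompact K₂ := hK.cthickening
    have hK₂G : K₂ ⊆ G := hδG
    have hball : ∀ z ∈ K, ∀ w : ℂ, dist w z ≤ δ → w ∈ K₂ := fun z hz w hwz =>
      mem_cthickening_of_dist_le w z δ K hz hwz
    obtain ⟨c, hc, h0, hbd⟩ := exists_bound G hG φ hsum K₂ hK₂ hK₂G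
    set t : ℕ → ℝ := fun n => ∑' k, c (k + n) with htdef
    have ht0 : Tendsto t atTop (𝓝 0) := tendsto_sum_nat_add c
    have htnn : ∀ n, 0 ≤ t n := fun n => tsum_nonneg (fun k => h0 _)
    obtain ⟨N, hN⟩ : ∃ N, ∀ n ≥ N, t n < ε :=
      eventually_atTop.1 (ht0.eventually (gt_mem_nhds hε0))
    rw [Metric.uniformCauchySeqOn_iff]
    intro η hη
    -- uniform continuity of the head composition on K₂
    have hcont : ContinuousOn (innerComp φ N) K₂ :=
      ((innerComp_prop φ hmaps hdiff N).2.continuousOn).mono hK₂G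
    have hUC := hK₂.uniformContinuousOn_of_continuous hcont
    rw [Metric.uniformContinuousOn_iff] at hUC
    obtain ⟨τ, hτ0, hτ⟩ := hUC η hη
    obtain ⟨M₀, hM₀⟩ : ∃ M₀, ∀ n ≥ M₀, t n < min (τ / 3) ε :=
      eventually_atTop.1 (ht0.eventually (gt_mem_nhds (by positivity)))
    set M := max N M₀ with hM
    have key : ∀ m m' : ℕ, M ≤ m → m ≤ m' → ∀ z ∈ K,
        dist (innerComp φ m' z) (innerComp φ m z) < η := by
      intro m m' hMm hmm' z hz
      have hNm : N ≤ m := le_trans (le_max_left _ _) hMm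
      have htm : t m < min (τ / 3) ε := hM₀ m (le_trans (le_max_right _ _) hMm)
      have htN : t N < ε := hN N le_rfl
      set f := tailComp φ N (m - N) with hf
      set u := tailComp φ m (m' - m) z with hu
      -- rewriting the inner compositions
      have hm'eq : innerComp φ m' z = innerComp φ N (f u) := by
        have h1 : m' = N + (m' - N) := by omega
        rw [h1, innerComp_add]
        congr 1
        have h2 : m' - N = (m - N) + (m' - m) := by omega
        rw [h2, tailComp_add]
        have h3 : N + (m - N) = m := by omega
        rw [h3]
      have hmeq : innerComp φ m z = innerComp φ N (f z) := by
        have h1 : m = N + (m - N) := by omega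
        rw [h1, innerComp_add]
      -- closed balls around points near z are inside K₂
      have hwK₂ : ∀ w : ℂ, dist w z < 2 * ε → closedBall w (t N) ⊆ K₂ := by
        intro w hw p hp
        apply hball z hz
        have : dist p w ≤ t N := hp
        calc dist p z ≤ dist p w + dist w z := dist_triangle _ _ _
          _ ≤ ε + 2 * ε := by linarith
          _ = δ := by rw [hε]; ring
      have hzK₂ : closedBall z (t N) ⊆ K₂ := hwK₂ z (by simpa using by positivity)
      -- orbit estimates
      have hufar : dist u z ≤ t m := by
        rw [dist_eq_norm]
        have hcl : closedBall z (t m) ⊆ K₂ := by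
          intro p hp
          apply hball z hz
          have : dist p z ≤ t m := hp
          have : t m < ε := lt_of_lt_of_le htm (min_le_right _ _)
          have hεδ : ε ≤ δ := by rw [hε]; linarith
          linarith
        exact (orbit_est φ K₂ c hc h0 hbd m (m' - m) m le_rfl z hcl).trans
          (ico_le_tail c hc h0 le_rfl)
      have huball : u ∈ ball z (2 * ε) := by
        rw [mem_ball]
        have : t m < ε := lt_of_lt_of_le htm (min_le_right _ _)
        linarith
      have hballK₂ : ball z (2 * ε) ⊆ K₂ := by
        intro w hw
        apply hball z hz
        have : dist w z < 2 * ε := hw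
        have : 2 * ε ≤ δ := by rw [hε]; linarith
        linarith
      have hfdiff : DifferentiableOn ℂ f (ball z (2 * ε)) :=
        ((tailComp_prop φ hmaps hdiff (m - N) N).2).mono (hballK₂.trans hK₂G)
      have hfnear : ∀ w : ℂ, dist w z < 2 * ε → dist (f w) w ≤ t N := by
        intro w hw
        rw [dist_eq_norm]
        exact (orbit_est φ K₂ c hc h0 hbd N (m - N) N le_rfl w (hwK₂ w hw)).trans
          (ico_le_tail c hc h0 le_rfl)
      have hfmaps : Set.MapsTo f (ball z (2 * ε)) (ball (f z) (5 * ε)) := by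
        intro w hw
        rw [mem_ball] at hw ⊢
        have h1 : dist (f w) w ≤ t N := hfnear w hw
        have h2 : dist (f z) z ≤ t N := hfnear z (by simpa using by positivity)
        calc dist (f w) (f z) ≤ dist (f w) w + dist w z + dist z (f z) :=
              dist_triangle4 _ _ _ _
          _ = dist (f w) w + dist w z + dist (f z) z := by rw [dist_comm z]
          _ < ε + 2 * ε + ε := by linarith
          _ < 5 * ε := by linarith
      have hS := Complex.dist_le_div_mul_dist_of_mapsTo_ball hfdiff (hfmaps.mono_right ball_subset_closedBall) huball
      have hratio : (5 * ε) / (2 * ε) = 5 / 2 := by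
        field_simp
      have hfufz : dist (f u) (f z) < τ := by
        rw [hratio] at hS
        have h1 : (5 / 2 : ℝ) * dist u z ≤ 5 / 2 * t m := by
          have := dist_nonneg (x := u) (y := z)
          nlinarith
        have h2 : t m < τ / 3 := lt_of_lt_of_le htm (min_le_left _ _)
        nlinarith
      -- the two points are in K₂
      have hfzK₂ : f z ∈ K₂ := by
        apply hball z hz
        have h2 : dist (f z) z ≤ t N := hfnear z (by simpa using by positivity)
        have : ε ≤ δ := by rw [hε]; linarith
        linarith
      have hfuK₂ : f u ∈ K₂ := by
        apply hball z hz
        have h1 : dist (f u) u ≤ t N := hfnear u huball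
        have h2 : dist u z ≤ t m := hufar
        have h3 : t m < ε := lt_of_lt_of_le htm (min_le_right _ _)
        have : 2 * ε ≤ δ := by rw [hε]; linarith
        calc dist (f u) z ≤ dist (f u) u + dist u z := dist_triangle _ _ _
          _ ≤ t N + t m := by linarith
          _ ≤ δ := by linarith
      rw [hm'eq, hmeq]
      exact hτ (f u) hfuK₂ (f z) hfzK₂ hfufz
    refine ⟨M, fun m' hm' m hm z hz => ?_⟩
    rcases le_total m m' with h | h
    · exact key m m' hm h z hz
    · rw [dist_comm]; exact key m' m hm' h z hz
  -- define the limit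
  set Φ : ℂ → ℂ := fun z => limUnder atTop (fun n => innerComp φ n z) with hΦ
  have hpt : ∀ z ∈ G, Tendsto (fun n => innerComp φ n z) atTop (𝓝 (Φ z)) := by
    intro z hz
    have h1 := hKey {z} (Set.singleton_subset_iff.2 hz) isCompact_singleton
    rw [Metric.uniformCauchySeqOn_iff] at h1
    have hcs : CauchySeq (fun n => innerComp φ n z) := by
      rw [Metric.cauchySeq_iff]
      intro η hη
      rcases h1 η hη with ⟨Nn, hNn⟩
      exact ⟨Nn, fun m hm n hn => hNn m hm n hn z rfl⟩
    exact hcs.tendsto_limUnder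
  have hTLU : TendstoLocallyUniformlyOn (fun n => innerComp φ n) Φ atTop G := by
    rw [tendstoLocallyUniformlyOn_iff_forall_isCompact hG]
    intro K hKG hK
    exact (hKey K hKG hK).tendstoUniformlyOn_of_tendsto (fun z hz => hpt z (hKG hz))
  refine ⟨Φ, hTLU, hTLU.differentiableOn
    (Eventually.of_forall fun n => (innerComp_prop φ hmaps hdiff n).2) hG, ?_⟩
  intro z hz
  exact mem_closure_of_tendsto (hpt z hz)
    (Eventually.of_forall fun n => (innerComp_prop φ hmaps hdiff n).1 hz)
end

section
/- Fix z with Re(z) > 0. The limit U(s,z) = limₙ Uₙ(s,z) of the inner compositions Uₙ(s,z) = Ω_{j=1}^n (w ↦ w + e^{(s−j)w}) applied to z exists, is an entire function of s, and satisfies the first-order difference equation U(s+1, z) − U(s, z) = e^{s·U(s,z)} for all s ∈ ℂ. -/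
open Complex Metric Filter Topology

/-- `Un n s z = f (s-1, f (s-2, ..., f (s-n, z)))` where `f s z = z + exp (s z)`. -/
noncomputable def Un : ℕ → ℂ → ℂ → ℂ
  | 0, _, z => z
  | (n + 1), s, z => Un n (s - 1) z + Complex.exp ((s - 1) * Un n (s - 1) z)

lemma un_comp (n m : ℕ) (s w : ℂ) :
    Un (n + m) s w = Un m s (Un n (s - m) w) := by
  induction m generalizing s with
  | zero => simp [Un]
  | succ m ih =>
    show Un ((n + m) + 1) s w = _
    rw [Un, ih (s - 1), Un]
    have : s - 1 - (m : ℂ) = s - ((m : ℕ) + 1 : ℕ) := by push_cast; ring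
    rw [this]

lemma un_diff (n : ℕ) : Differentiable ℂ (fun p : ℂ × ℂ => Un n p.1 p.2) := by
  induction n with
  | zero => simp [Un]
  | succ n ih =>
    have h1 : Differentiable ℂ (fun p : ℂ × ℂ => Un n (p.1 - 1) p.2) :=
      ih.comp ((differentiable_fst.sub_const (1:ℂ)).prodMk differentiable_snd)
    exact h1.add (((differentiable_fst.sub_const 1).mul h1).cexp)

noncomputable def UA (z : ℂ) (T : ℝ) : ℝ := Real.exp (T * (‖z‖ + z.re))
noncomputable def Uq (z : ℂ) : ℝ := Real.exp (-(z.re / 2))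
noncomputable def UE (z : ℂ) (T : ℝ) (s : ℂ) : ℝ :=
  UA z T * Real.exp (s.re * (z.re / 2)) * (Uq z / (1 - Uq z))
noncomputable def US (z : ℂ) (T : ℝ) (s : ℂ) : ℝ :=
  ∑' k : ℕ, (‖s‖ + (k + 1)) * UA z T * Real.exp ((s.re - (k + 1)) * (z.re / 2))
def Good (z : ℂ) (T : ℝ) (s : ℂ) : Prop :=
  s.re < 0 ∧ |s.im| < T ∧ UE z T s < z.re / 4 ∧
    UA z T * Real.exp ((s.re - 1) * z.re) < z.re / 4

variable {z : ℂ} {T : ℝ}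

lemma UA_pos : 0 < UA z T := Real.exp_pos _
lemma Uq_pos : 0 < Uq z := Real.exp_pos _
lemma Uq_lt_one (hc : 0 < z.re) : Uq z < 1 := by
  rw [Uq, Real.exp_lt_one_iff]; linarith
lemma UE_pos (hc : 0 < z.re) : 0 < UE z T s := by
  have h1 := Uq_lt_one (z := z) hc
  have h2 := Uq_pos (z := z)
  exact mul_pos (mul_pos UA_pos (Real.exp_pos _)) (div_pos h2 (by linarith))

lemma UE_sub_one (s : ℂ) : UE z T (s - 1) = UE z T s * Uq z := by
  simp only [UE, Uq, Complex.sub_re, Complex.one_re]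
  rw [show (s.re - 1) * (z.re / 2) = s.re * (z.re / 2) + -(z.re / 2) by ring, Real.exp_add]
  ring

lemma Good.sub_one (hc : 0 < z.re) (h : Good z T s) : Good z T (s - 1) := by
  obtain ⟨h1, h2, h3, h4⟩ := h
  have hq1 := Uq_lt_one (z := z) hc
  have hq0 := Uq_pos (z := z)
  have hE := UE_pos (z := z) (T := T) (s := s) hc
  refine ⟨by simp [Complex.sub_re]; linarith, by simpa using h2, ?_, ?_⟩
  · rw [UE_sub_one]
    calc UE z T s * Uq z ≤ UE z T s * 1 := by nlinarith
    _ < z.re / 4 := by linarith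
  · have : ((s - 1 : ℂ).re - 1) * z.re ≤ (s.re - 1) * z.re := by
      simp [Complex.sub_re]; nlinarith
    calc UA z T * Real.exp (((s-1:ℂ).re - 1) * z.re) ≤ UA z T * Real.exp ((s.re - 1) * z.re) := by
          have := Real.exp_le_exp.2 this
          nlinarith [UA_pos (z := z) (T := T)]
    _ < z.re / 4 := h4

lemma exp_bound (hc : 0 < z.re) (hT : 0 ≤ T) {a v : ℂ} (ha : a.re ≤ 0) (haT : |a.im| ≤ T)
    (hv : dist v z ≤ z.re / 2) :
    ‖(Complex.exp (a * v))‖ ≤ UA z T * Real.exp (a.re * (z.re / 2)) := by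
  have hre : |(v - z).re| ≤ z.re / 2 := (Complex.abs_re_le_norm _).trans (by rwa [← Complex.dist_eq])
  have hvre : z.re / 2 ≤ v.re := by
    have := (abs_le.1 hre).1
    simp only [Complex.sub_re] at this; linarith
  have hvim : |v.im| ≤ ‖z‖ + z.re := by
    have h1 : |v.im| ≤ ‖v‖ := Complex.abs_im_le_norm v
    have h2 : ‖v‖ - ‖z‖ ≤ dist v z := by
      rw [Complex.dist_eq]
      exact norm_sub_norm_le v z
    linarith
  rw [Complex.norm_exp, UA, ← Real.exp_add]
  apply Real.exp_le_exp.2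
  rw [Complex.mul_re]
  have h3 : a.re * v.re ≤ a.re * (z.re / 2) := mul_le_mul_of_nonpos_left hvre ha
  have h4 : -(a.im * v.im) ≤ T * (‖z‖ + z.re) := by
    calc -(a.im * v.im) ≤ |a.im * v.im| := neg_le_abs _
    _ = |a.im| * |v.im| := abs_mul _ _
    _ ≤ T * (‖z‖ + z.re) := mul_le_mul haT hvim (abs_nonneg _) hT
  linarith

lemma UE_step (hc : 0 < z.re) (s : ℂ) :
    UA z T * Real.exp (((s - 1 : ℂ)).re * (z.re / 2)) + UE z T (s - 1) = UE z T s := by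
  have hq1 := Uq_lt_one (z := z) hc
  have hq0 := Uq_pos (z := z)
  have hne : 1 - Uq z ≠ 0 := by linarith
  have hE : Real.exp ((s.re - 1) * (z.re / 2)) = Real.exp (s.re * (z.re / 2)) * Uq z := by
    rw [Uq, ← Real.exp_add]; congr 1; ring
  rw [UE_sub_one]
  simp only [UE, Complex.sub_re, Complex.one_re]
  rw [hE]
  field_simp
  ring

lemma drift (hc : 0 < z.re) (hT : 0 ≤ T) :
    ∀ (n : ℕ) (s w : ℂ), Good z T s → dist w z ≤ z.re / 4 →
      dist (Un n s w) w ≤ UE z T s := by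
  intro n
  induction n with
  | zero =>
    intro s w _ _
    simpa [Un] using (UE_pos (T := T) (s := s) hc).le
  | succ n ih =>
    intro s w hs hw
    have hs1 := hs.sub_one hc
    have h1 := ih (s - 1) w hs1 hw
    have hv : dist (Un n (s - 1) w) z ≤ z.re / 2 := by
      calc dist (Un n (s - 1) w) z ≤ dist (Un n (s - 1) w) w + dist w z := dist_triangle _ _ _
      _ ≤ UE z T (s - 1) + z.re / 4 := add_le_add h1 hw
      _ ≤ z.re / 2 := by linarith [hs1.2.2.1]
    have ha : (s - 1 : ℂ).re ≤ 0 := by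
      simp only [Complex.sub_re, Complex.one_re]; linarith [hs.1]
    have haT : |(s - 1 : ℂ).im| ≤ T := by simpa using hs.2.1.le
    have hexp := exp_bound hc hT ha haT hv
    show dist (Un n (s - 1) w + Complex.exp ((s - 1) * Un n (s - 1) w)) w ≤ UE z T s
    calc dist (Un n (s - 1) w + Complex.exp ((s - 1) * Un n (s - 1) w)) w
        ≤ dist (Un n (s - 1) w + Complex.exp ((s - 1) * Un n (s - 1) w)) (Un n (s - 1) w)
          + dist (Un n (s - 1) w) w := dist_triangle _ _ _
    _ ≤ ‖(Complex.exp ((s - 1) * Un n (s - 1) w))‖ + UE z T (s - 1) := by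
        rw [dist_self_add_left]
        exact add_le_add le_rfl h1
    _ ≤ UA z T * Real.exp ((s - 1 : ℂ).re * (z.re / 2)) + UE z T (s - 1) :=
        add_le_add hexp le_rfl
    _ = UE z T s := UE_step hc s

lemma exp_split (s : ℂ) (k : ℕ) :
    Real.exp ((s.re - (k + 1)) * (z.re / 2))
      = Real.exp (s.re * (z.re / 2)) * Uq z ^ (k + 1) := by
  rw [Uq, ← Real.exp_nat_mul, ← Real.exp_add]
  congr 1
  push_cast
  ring

lemma summable_US (hc : 0 < z.re) (s : ℂ) :
    Summable (fun k : ℕ =>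
      (‖s‖ + (k + 1)) * UA z T * Real.exp ((s.re - (k + 1)) * (z.re / 2))) := by
  have hq0 := Uq_pos (z := z)
  have hq1 := Uq_lt_one (z := z) hc
  have hgeo : Summable (fun k : ℕ => ((k : ℝ) + 1) * Uq z ^ k) := by
    have h1 : Summable (fun k : ℕ => (k : ℝ) ^ 1 * Uq z ^ k) :=
      summable_pow_mul_geometric_of_norm_lt_one 1
        (by rwa [Real.norm_eq_abs, abs_of_pos hq0])
    have h2 : Summable (fun k : ℕ => Uq z ^ k) := summable_geometric_of_lt_one hq0.le hq1
    simpa [add_mul, pow_one] using h1.add h2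
  apply Summable.of_nonneg_of_le (f := fun k : ℕ =>
      ((‖s‖ + 1) * UA z T * Real.exp (s.re * (z.re / 2)) * Uq z) * (((k : ℝ) + 1) * Uq z ^ k))
  · intro k
    have h0 : (0:ℝ) ≤ ‖s‖ + ((k:ℝ) + 1) := by positivity
    exact mul_nonneg (mul_nonneg h0 UA_pos.le) (Real.exp_pos _).le
  · intro k
    have base : (0 : ℝ) ≤ UA z T * Real.exp (s.re * (z.re / 2)) * Uq z * Uq z ^ k :=
      mul_nonneg (mul_nonneg (mul_nonneg UA_pos.le (Real.exp_pos _).le) (Uq_pos (z := z)).le)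
        (pow_nonneg (Uq_pos (z := z)).le k)
    have coef : ‖s‖ + ((k : ℝ) + 1) ≤ (‖s‖ + 1) * ((k : ℝ) + 1) := by
      nlinarith [norm_nonneg s, Nat.cast_nonneg (α := ℝ) k]
    calc (‖s‖ + (k + 1)) * UA z T * Real.exp ((s.re - (k + 1)) * (z.re / 2))
        = (‖s‖ + ((k : ℝ) + 1)) * (UA z T * Real.exp (s.re * (z.re / 2)) * Uq z * Uq z ^ k) := by
          rw [exp_split, pow_succ]; ring
    _ ≤ ((‖s‖ + 1) * ((k : ℝ) + 1)) * (UA z T * Real.exp (s.re * (z.re / 2)) * Uq z * Uq z ^ k) :=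
          mul_le_mul_of_nonneg_right coef base
    _ = ((‖s‖ + 1) * UA z T * Real.exp (s.re * (z.re / 2)) * Uq z) * (((k : ℝ) + 1) * Uq z ^ k) := by
          ring
  · exact hgeo.mul_left _

lemma US_nonneg (hc : 0 < z.re) (hT : 0 ≤ T) (s : ℂ) : 0 ≤ US z T s := by
  apply tsum_nonneg
  intro k
  have h0 : (0:ℝ) ≤ ‖s‖ + ((k:ℝ) + 1) := by positivity
  exact mul_nonneg (mul_nonneg h0 UA_pos.le) (Real.exp_pos _).le

lemma US_rec (hc : 0 < z.re) (s : ℂ) :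
    (‖s‖ + 1) * UA z T * Real.exp ((s.re - 1) * (z.re / 2)) + US z T (s - 1)
      ≤ US z T s := by
  have hsum := summable_US (T := T) hc s
  have hsum' := summable_US (T := T) hc (s - 1)
  have hshift : Summable (fun k : ℕ =>
      (‖s‖ + ((k + 1 : ℕ) + 1)) * UA z T
        * Real.exp ((s.re - ((k + 1 : ℕ) + 1)) * (z.re / 2))) :=
    (summable_nat_add_iff 1).mpr hsum
  simp only [US]
  rw [Summable.tsum_eq_zero_add hsum]
  apply add_le_add
  · apply le_of_eq
    norm_num
  · apply Summable.tsum_le_tsum _ hsum' hshift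
    intro k
    have h1 : ‖(s - 1)‖ ≤ ‖s‖ + 1 := by
      have := norm_sub_le s 1
      simpa using this
    have h2 : ((s - 1 : ℂ).re - ((k : ℝ) + 1)) = s.re - (((k + 1 : ℕ) : ℝ) + 1) := by
      simp only [Complex.sub_re, Complex.one_re]
      push_cast; ring
    rw [h2]
    apply mul_le_mul_of_nonneg_right _ (Real.exp_pos _).le
    apply mul_le_mul_of_nonneg_right _ UA_pos.le
    have : ((k + 1 : ℕ) : ℝ) = (k : ℝ) + 1 := by push_cast; ring
    rw [this]
    linarith

lemma exp_lip (hc : 0 < z.re) (hT : 0 ≤ T) {a v v' : ℂ} (ha : a.re ≤ 0) (haT : |a.im| ≤ T)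
    (hv : dist v z ≤ z.re / 2) (hv' : dist v' z ≤ z.re / 2) :
    dist (Complex.exp (a * v)) (Complex.exp (a * v'))
      ≤ ‖a‖ * (UA z T * Real.exp (a.re * (z.re / 2))) * dist v v' := by
  have hderiv : ∀ x ∈ closedBall z (z.re / 2),
      HasDerivWithinAt (fun w => Complex.exp (a * w)) (Complex.exp (a * x) * a)
        (closedBall z (z.re / 2)) x := by
    intro x _
    have h1 : HasDerivAt (fun w : ℂ => a * w) a x := by
      simpa using (hasDerivAt_id x).const_mul a
    exact h1.cexp.hasDerivWithinAt
  have hbound : ∀ x ∈ closedBall z (z.re / 2),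
      ‖Complex.exp (a * x) * a‖ ≤ ‖a‖ * (UA z T * Real.exp (a.re * (z.re / 2))) := by
    intro x hx
    have h2 := exp_bound hc hT ha haT (mem_closedBall.1 hx)
    calc ‖Complex.exp (a * x) * a‖ = ‖(Complex.exp (a * x))‖ * ‖a‖ := by
          simp [map_mul]
    _ ≤ (UA z T * Real.exp (a.re * (z.re / 2))) * ‖a‖ :=
          mul_le_mul_of_nonneg_right h2 (norm_nonneg a)
    _ = ‖a‖ * (UA z T * Real.exp (a.re * (z.re / 2))) := mul_comm _ _
  have := Convex.norm_image_sub_le_of_norm_hasDerivWithin_le hderiv hbound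
    (convex_closedBall z (z.re / 2)) (mem_closedBall.2 hv') (mem_closedBall.2 hv)
  rw [dist_eq_norm, dist_eq_norm]
  exact this

lemma lip (hc : 0 < z.re) (hT : 0 ≤ T) :
    ∀ (n : ℕ) (s w w' : ℂ), Good z T s → dist w z ≤ z.re / 4 → dist w' z ≤ z.re / 4 →
      dist (Un n s w) (Un n s w') ≤ Real.exp (US z T s) * dist w w' := by
  intro n
  induction n with
  | zero =>
    intro s w w' _ _ _
    calc dist (Un 0 s w) (Un 0 s w') = 1 * dist w w' := by simp [Un]
    _ ≤ Real.exp (US z T s) * dist w w' :=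
        mul_le_mul_of_nonneg_right (Real.one_le_exp (US_nonneg hc hT s)) dist_nonneg
  | succ n ih =>
    intro s w w' hs hw hw'
    have hs1 := hs.sub_one hc
    have hvz : dist (Un n (s - 1) w) z ≤ z.re / 2 := by
      calc dist (Un n (s - 1) w) z ≤ dist (Un n (s - 1) w) w + dist w z := dist_triangle _ _ _
      _ ≤ UE z T (s - 1) + z.re / 4 := add_le_add (drift hc hT n (s - 1) w hs1 hw) hw
      _ ≤ z.re / 2 := by linarith [hs1.2.2.1]
    have hv'z : dist (Un n (s - 1) w') z ≤ z.re / 2 := by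
      calc dist (Un n (s - 1) w') z ≤ dist (Un n (s - 1) w') w' + dist w' z := dist_triangle _ _ _
      _ ≤ UE z T (s - 1) + z.re / 4 := add_le_add (drift hc hT n (s - 1) w' hs1 hw') hw'
      _ ≤ z.re / 2 := by linarith [hs1.2.2.1]
    have ha : (s - 1 : ℂ).re ≤ 0 := by
      simp only [Complex.sub_re, Complex.one_re]; linarith [hs.1]
    have haT : |(s - 1 : ℂ).im| ≤ T := by simpa using hs.2.1.le
    have hexp := exp_lip hc hT ha haT hvz hv'z
    have hvv' := ih (s - 1) w w' hs1 hw hw'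
    have habs : ‖(s - 1)‖ ≤ ‖s‖ + 1 := by
      have := norm_sub_le s 1
      simpa using this
    set κ := (‖s‖ + 1) * UA z T * Real.exp ((s.re - 1) * (z.re / 2)) with hκ
    have hκ0 : 0 ≤ κ := by
      have h0 : (0:ℝ) ≤ ‖s‖ + 1 := by positivity
      exact mul_nonneg (mul_nonneg h0 UA_pos.le) (Real.exp_pos _).le
    have hre : ((s - 1 : ℂ)).re * (z.re / 2) = (s.re - 1) * (z.re / 2) := by
      simp [Complex.sub_re]
    have hκle : ‖(s - 1)‖ * (UA z T * Real.exp ((s - 1 : ℂ).re * (z.re / 2))) ≤ κ := by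
      rw [hre, hκ]
      have h1 : (0:ℝ) ≤ UA z T * Real.exp ((s.re - 1) * (z.re / 2)) :=
        mul_nonneg UA_pos.le (Real.exp_pos _).le
      calc ‖(s - 1)‖ * (UA z T * Real.exp ((s.re - 1) * (z.re / 2)))
          ≤ (‖s‖ + 1) * (UA z T * Real.exp ((s.re - 1) * (z.re / 2))) :=
            mul_le_mul_of_nonneg_right habs h1
      _ = (‖s‖ + 1) * UA z T * Real.exp ((s.re - 1) * (z.re / 2)) := by ring
    show dist (Un n (s - 1) w + Complex.exp ((s - 1) * Un n (s - 1) w))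
        (Un n (s - 1) w' + Complex.exp ((s - 1) * Un n (s - 1) w')) ≤ _
    calc dist (Un n (s - 1) w + Complex.exp ((s - 1) * Un n (s - 1) w))
          (Un n (s - 1) w' + Complex.exp ((s - 1) * Un n (s - 1) w'))
        ≤ dist (Un n (s - 1) w) (Un n (s - 1) w')
          + dist (Complex.exp ((s - 1) * Un n (s - 1) w)) (Complex.exp ((s - 1) * Un n (s - 1) w')) :=
          dist_add_add_le _ _ _ _
    _ ≤ dist (Un n (s - 1) w) (Un n (s - 1) w')
          + κ * dist (Un n (s - 1) w) (Un n (s - 1) w') := by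
          refine add_le_add le_rfl (hexp.trans ?_)
          exact mul_le_mul_of_nonneg_right hκle dist_nonneg
    _ = (1 + κ) * dist (Un n (s - 1) w) (Un n (s - 1) w') := by ring
    _ ≤ (1 + κ) * (Real.exp (US z T (s - 1)) * dist w w') := by
          apply mul_le_mul_of_nonneg_left hvv' (by linarith)
    _ ≤ Real.exp κ * (Real.exp (US z T (s - 1)) * dist w w') := by
          apply mul_le_mul_of_nonneg_right _ (mul_nonneg (Real.exp_pos _).le dist_nonneg)
          linarith [Real.add_one_le_exp κ]
    _ = Real.exp (κ + US z T (s - 1)) * dist w w' := by rw [Real.exp_add]; ring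
    _ ≤ Real.exp (US z T s) * dist w w' := by
          apply mul_le_mul_of_nonneg_right _ dist_nonneg
          exact Real.exp_le_exp.2 (US_rec hc s)

lemma eps_bound (hc : 0 < z.re) (hT : 0 ≤ T) (n : ℕ) (s : ℂ) (him : |s.im| ≤ T) :
    ‖(Complex.exp ((s - n - 1) * z))‖
      ≤ UA z T * Real.exp ((s.re - 1) * z.re) * Real.exp (-z.re) ^ n := by
  rw [Complex.norm_exp, UA, ← Real.exp_nat_mul, ← Real.exp_add, ← Real.exp_add]
  apply Real.exp_le_exp.2
  have h1 : ((s - n - 1) * z).re = (s.re - n - 1) * z.re - s.im * z.im := by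
    simp [Complex.mul_re, Complex.sub_re, Complex.sub_im, Complex.natCast_re, Complex.natCast_im]
  rw [h1]
  have h2 : -(s.im * z.im) ≤ T * (‖z‖ + z.re) := by
    calc -(s.im * z.im) ≤ |s.im * z.im| := neg_le_abs _
    _ = |s.im| * |z.im| := abs_mul _ _
    _ ≤ T * (‖z‖ + z.re) :=
        mul_le_mul him ((Complex.abs_im_le_norm z).trans (by linarith)) (abs_nonneg _) hT
  have h3 : (s.re - n - 1) * z.re = (s.re - 1) * z.re + (n : ℝ) * -z.re := by ring
  linarith

lemma increment (hc : 0 < z.re) (hT : 0 ≤ T) (s : ℂ) (hs : Good z T s) (n : ℕ) :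
    dist (Un n s z) (Un (n + 1) s z)
      ≤ (Real.exp (US z T s) * (UA z T * Real.exp ((s.re - 1) * z.re))) * Real.exp (-z.re) ^ n := by
  have hcomp : Un (n + 1) s z = Un n s (z + Complex.exp ((s - n - 1) * z)) := by
    rw [show n + 1 = 1 + n from Nat.add_comm n 1, un_comp]
    congr 1
  have heps := eps_bound hc hT n s hs.2.1.le
  have hq2 : Real.exp (-z.re) ^ n ≤ 1 :=
    pow_le_one₀ (Real.exp_pos _).le (by rw [Real.exp_le_one_iff]; linarith)
  have hepsz : dist (z + Complex.exp ((s - n - 1) * z)) z ≤ z.re / 4 := by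
    rw [dist_self_add_left]
    have hb : UA z T * Real.exp ((s.re - 1) * z.re) * Real.exp (-z.re) ^ n ≤ z.re / 4 := by
      have h4 := hs.2.2.2
      nlinarith [mul_pos (UA_pos (z := z) (T := T)) (Real.exp_pos ((s.re - 1) * z.re)), pow_nonneg (Real.exp_pos (-z.re)).le n]
    exact heps.trans hb
  have hl := lip hc hT n s (z + Complex.exp ((s - n - 1) * z)) z hs hepsz (by simp; positivity)
  rw [hcomp, dist_comm]
  calc dist (Un n s (z + Complex.exp ((s - n - 1) * z))) (Un n s z)
      ≤ Real.exp (US z T s) * dist (z + Complex.exp ((s - n - 1) * z)) z := hl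
  _ ≤ Real.exp (US z T s) * (UA z T * Real.exp ((s.re - 1) * z.re) * Real.exp (-z.re) ^ n) := by
      apply mul_le_mul_of_nonneg_left _ (Real.exp_pos _).le
      rw [dist_self_add_left]
      exact heps
  _ = (Real.exp (US z T s) * (UA z T * Real.exp ((s.re - 1) * z.re))) * Real.exp (-z.re) ^ n := by
      ring

lemma converges_good (hc : 0 < z.re) (hT : 0 ≤ T) (s : ℂ) (hs : Good z T s) :
    ∃ L, Tendsto (fun n => Un n s z) atTop (nhds L) := by
  have hr : Real.exp (-z.re) < 1 := by rw [Real.exp_lt_one_iff]; linarith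
  have := cauchySeq_of_le_geometric (Real.exp (-z.re))
    (Real.exp (US z T s) * (UA z T * Real.exp ((s.re - 1) * z.re))) hr
    (increment hc hT s hs)
  exact cauchySeq_tendsto_of_complete this

lemma UE_sub_nat (s : ℂ) (m : ℕ) : UE z T (s - m) = UE z T s * Uq z ^ m := by
  induction m with
  | zero => simp
  | succ m ih =>
    have h : (s - ((m : ℕ) + 1 : ℕ) : ℂ) = (s - m) - 1 := by push_cast; ring
    rw [h, UE_sub_one, ih, pow_succ, mul_assoc]

lemma exp_sub_nat (s : ℂ) (m : ℕ) :
    Real.exp (((s - m : ℂ).re - 1) * z.re) = Real.exp ((s.re - 1) * z.re) * Real.exp (-z.re) ^ m := by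
  rw [← Real.exp_nat_mul, ← Real.exp_add]
  congr 1
  simp only [Complex.sub_re, Complex.natCast_re]
  ring

lemma exists_good (hc : 0 < z.re) (s : ℂ) : ∃ m : ℕ, Good z (|s.im| + 1) (s - m) := by
  set T := |s.im| + 1 with hTdef
  have hq0 := Uq_pos (z := z)
  have hq1 := Uq_lt_one (z := z) hc
  have hr1 : Real.exp (-z.re) < 1 := by rw [Real.exp_lt_one_iff]; linarith
  have t1 : Tendsto (fun m : ℕ => UE z T s * Uq z ^ m) atTop (nhds 0) := by
    have := (tendsto_pow_atTop_nhds_zero_of_lt_one hq0.le hq1).const_mul (UE z T s)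
    simpa using this
  have t2 : Tendsto (fun m : ℕ => (UA z T * Real.exp ((s.re - 1) * z.re)) * Real.exp (-z.re) ^ m)
      atTop (nhds 0) := by
    have := (tendsto_pow_atTop_nhds_zero_of_lt_one (Real.exp_pos _).le hr1).const_mul
      (UA z T * Real.exp ((s.re - 1) * z.re))
    simpa using this
  have e1 := t1.eventually_lt_const (show (0:ℝ) < z.re / 4 by linarith)
  have e2 := t2.eventually_lt_const (show (0:ℝ) < z.re / 4 by linarith)
  have e3 : ∀ᶠ m : ℕ in atTop, s.re < m := by
    refine Filter.eventually_atTop.2 ⟨⌈s.re⌉₊ + 1, fun m hm => ?_⟩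
    calc s.re ≤ (⌈s.re⌉₊ : ℝ) := Nat.le_ceil _
    _ < m := by exact_mod_cast Nat.lt_of_lt_of_le (Nat.lt_succ_self _) hm
  obtain ⟨m, h1, h2⟩ := (e1.and (e2.and e3)).exists
  obtain ⟨h2, h3⟩ := h2
  refine ⟨m, ?_, ?_, ?_, ?_⟩
  · simp only [Complex.sub_re, Complex.natCast_re]; linarith
  · simp only [Complex.sub_im, Complex.natCast_im, sub_zero]; linarith
  · rw [UE_sub_nat]; exact h1
  · rw [exp_sub_nat, ← mul_assoc]; exact h2

lemma tendsto_un (hc : 0 < z.re) (s : ℂ) :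
    ∃ L, Tendsto (fun n => Un n s z) atTop (nhds L) := by
  obtain ⟨m, hm⟩ := exists_good hc s
  obtain ⟨L0, hL0⟩ := converges_good hc (by positivity) _ hm
  have hcont : Continuous (fun w => Un m s w) :=
    (un_diff m).continuous.comp (continuous_const.prodMk continuous_id)
  have h2 : Tendsto (fun n => Un (n + m) s z) atTop (nhds (Un m s L0)) := by
    simpa [Function.comp_def, un_comp] using (hcont.tendsto L0).comp hL0
  exact ⟨Un m s L0, (tendsto_add_atTop_iff_nat m).1 h2⟩

lemma U_comp (hc : 0 < z.re) (U : ℂ → ℂ)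
    (hU : ∀ s, Tendsto (fun n => Un n s z) atTop (nhds (U s))) (s : ℂ) (m : ℕ) :
    U s = Un m s (U (s - m)) := by
  have h1 : Tendsto (fun n => Un (n + m) s z) atTop (nhds (U s)) :=
    (tendsto_add_atTop_iff_nat m).2 (hU s)
  have hcont : Continuous (fun w => Un m s w) :=
    (un_diff m).continuous.comp (continuous_const.prodMk continuous_id)
  have h2 : Tendsto (fun n => Un (n + m) s z) atTop (nhds (Un m s (U (s - m)))) := by
    simpa [Function.comp_def, un_comp] using (hcont.tendsto _).comp (hU (s - m))
  exact tendsto_nhds_unique h1 h2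

lemma good_isOpen (hc : 0 < z.re) : IsOpen {s : ℂ | Good z T s} := by
  have h1 : IsOpen {s : ℂ | s.re < 0} := isOpen_lt Complex.continuous_re continuous_const
  have h2 : IsOpen {s : ℂ | |s.im| < T} :=
    isOpen_lt (continuous_abs.comp Complex.continuous_im) continuous_const
  have h3 : IsOpen {s : ℂ | UE z T s < z.re / 4} := by
    apply isOpen_lt _ continuous_const
    unfold UE
    fun_prop
  have h4 : IsOpen {s : ℂ | UA z T * Real.exp ((s.re - 1) * z.re) < z.re / 4} := by
    apply isOpen_lt _ continuous_const
    fun_prop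
  have : {s : ℂ | Good z T s}
      = {s : ℂ | s.re < 0} ∩ ({s : ℂ | |s.im| < T} ∩ ({s : ℂ | UE z T s < z.re / 4}
          ∩ {s : ℂ | UA z T * Real.exp ((s.re - 1) * z.re) < z.re / 4})) := by
    ext s; simp [Good, Set.mem_setOf_eq, and_assoc]
  rw [this]
  exact h1.inter (h2.inter (h3.inter h4))

lemma US_mono (hc : 0 < z.re) {s s' : ℂ} (h1 : ‖s‖ ≤ ‖s'‖)
    (h2 : s.re ≤ s'.re) : US z T s ≤ US z T s' := by
  apply Summable.tsum_le_tsum _ (summable_US hc s) (summable_US hc s')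
  intro k
  have hA := UA_pos (z := z) (T := T)
  have he : Real.exp ((s.re - (k + 1)) * (z.re / 2)) ≤ Real.exp ((s'.re - (k + 1)) * (z.re / 2)) :=
    Real.exp_le_exp.2 (by nlinarith)
  have h0 : (0:ℝ) ≤ ‖s‖ + ((k:ℝ) + 1) := by positivity
  calc (‖s‖ + (k + 1)) * UA z T * Real.exp ((s.re - (k + 1)) * (z.re / 2))
      ≤ (‖s'‖ + (k + 1)) * UA z T * Real.exp ((s.re - (k + 1)) * (z.re / 2)) := by
        apply mul_le_mul_of_nonneg_right _ (Real.exp_pos _).le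
        apply mul_le_mul_of_nonneg_right _ hA.le
        linarith
  _ ≤ (‖s'‖ + (k + 1)) * UA z T * Real.exp ((s'.re - (k + 1)) * (z.re / 2)) := by
        apply mul_le_mul_of_nonneg_left he
        have h0' : (0:ℝ) ≤ ‖s'‖ + ((k:ℝ) + 1) := by positivity
        exact mul_nonneg h0' hA.le

lemma tlu_good (hc : 0 < z.re) (hT : 0 ≤ T) (U : ℂ → ℂ)
    (hU : ∀ s, Tendsto (fun n => Un n s z) atTop (nhds (U s))) :
    TendstoLocallyUniformlyOn (fun n s => Un n s z) U atTop {s | Good z T s} := by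
  have hopen := good_isOpen (T := T) hc
  rw [tendstoLocallyUniformlyOn_iff_forall_isCompact hopen]
  intro K hK hKc
  obtain ⟨R0, hR0⟩ := (Metric.isBounded_iff_subset_closedBall 0).1 hKc.isBounded
  set R : ℝ := max R0 0 with hRdef
  have hR : ∀ s ∈ K, ‖s‖ ≤ R := by
    intro s hs
    have := hR0 hs
    rw [Metric.mem_closedBall, Complex.dist_eq, sub_zero] at this
    exact this.trans (le_max_left _ _)
  set r : ℝ := Real.exp (-z.re) with hrdef
  have hr0 : 0 < r := Real.exp_pos _
  have hr1 : r < 1 := by rw [hrdef, Real.exp_lt_one_iff]; linarith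
  set C : ℝ := Real.exp (US z T (R : ℂ)) * (UA z T * Real.exp (-z.re)) with hCdef
  have hCn : ∀ s ∈ K, ∀ n : ℕ, dist (Un n s z) (Un (n + 1) s z) ≤ C * r ^ n := by
    intro s hs n
    have hgood : Good z T s := hK hs
    refine (increment hc hT s hgood n).trans ?_
    apply mul_le_mul_of_nonneg_right _ (pow_nonneg hr0.le n)
    apply mul_le_mul
    · apply Real.exp_le_exp.2
      apply US_mono hc
      · rw [Complex.norm_real, Real.norm_eq_abs, _root_.abs_of_nonneg (le_max_right R0 0)]
        exact hR s hs
      · rw [Complex.ofReal_re]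
        exact (hgood.1.le).trans (le_max_right R0 0)
    · apply mul_le_mul_of_nonneg_left _ UA_pos.le
      apply Real.exp_le_exp.2
      nlinarith [hgood.1]
    · exact mul_nonneg UA_pos.le (Real.exp_pos _).le
    · exact (Real.exp_pos _).le
  have hdistU : ∀ s ∈ K, ∀ n : ℕ, dist (Un n s z) (U s) ≤ C * r ^ n / (1 - r) := by
    intro s hs n
    exact dist_le_of_le_geometric_of_tendsto r C hr1 (hCn s hs) (hU s) n
  rw [Metric.tendstoUniformlyOn_iff]
  intro ε hε
  have hto : Tendsto (fun n : ℕ => C * r ^ n / (1 - r)) atTop (nhds 0) := by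
    have := ((tendsto_pow_atTop_nhds_zero_of_lt_one hr0.le hr1).const_mul C).div_const (1 - r)
    simpa using this
  filter_upwards [hto.eventually_lt_const hε] with n hn x hx
  calc dist (U x) (Un n x z) = dist (Un n x z) (U x) := dist_comm _ _
  _ ≤ C * r ^ n / (1 - r) := hdistU x hx n
  _ < ε := hn

lemma diffOn_good (hc : 0 < z.re) (hT : 0 ≤ T) (U : ℂ → ℂ)
    (hU : ∀ s, Tendsto (fun n => Un n s z) atTop (nhds (U s))) :
    DifferentiableOn ℂ U {s | Good z T s} := by
  apply (tlu_good hc hT U hU).differentiableOn _ (good_isOpen (T := T) hc)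
  apply Filter.Eventually.of_forall
  intro n
  exact (((un_diff n).comp (differentiable_id.prodMk (differentiable_const z))).differentiableOn)

theorem stmt_7 (z : ℂ) (hz : 0 < z.re) :
    ∃ U : ℂ → ℂ,
      (∀ s : ℂ, Tendsto (fun n => Un n s z) atTop (nhds (U s))) ∧
      Differentiable ℂ U ∧
      (∀ s : ℂ, U (s + 1) - U s = Complex.exp (s * U s)) := by
  have hex : ∀ s : ℂ, ∃ L, Tendsto (fun n => Un n s z) atTop (nhds L) := tendsto_un hz
  choose U hU using hex
  refine ⟨U, hU, ?_, ?_⟩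
  · intro s0
    obtain ⟨m, hm⟩ := exists_good hz s0
    set T : ℝ := |s0.im| + 1 with hTdef
    have hT : (0:ℝ) ≤ T := by positivity
    have hopen : IsOpen {s : ℂ | Good z T s} := good_isOpen (T := T) hz
    have hDon := diffOn_good hz hT U hU
    have h1 : DifferentiableAt ℂ U (s0 - m) := hDon.differentiableAt (hopen.mem_nhds hm)
    have h2 : DifferentiableAt ℂ (fun s => Un m s (U (s - m))) s0 := by
      have hg : DifferentiableAt ℂ (fun s : ℂ => ((s, U (s - m)) : ℂ × ℂ)) s0 :=
        differentiableAt_id.prodMk (h1.comp s0 (differentiableAt_id.sub_const _))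
      exact ((un_diff m) (s0, U (s0 - m))).comp s0 hg
    have h3 : U = fun s => Un m s (U (s - m)) := funext fun s => U_comp hz U hU s m
    rw [h3]
    exact h2
  · intro s
    have h1 : Tendsto (fun n => Un (n + 1) (s + 1) z) atTop (nhds (U (s + 1))) :=
      (tendsto_add_atTop_iff_nat 1).2 (hU (s + 1))
    have h2 : (fun n => Un (n + 1) (s + 1) z) = fun n => Un n s z + Complex.exp (s * Un n s z) := by
      funext n
      show Un n (s + 1 - 1) z + Complex.exp ((s + 1 - 1) * Un n (s + 1 - 1) z) = _
      rw [add_sub_cancel_right]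
    have h3 : Tendsto (fun n => Un n s z + Complex.exp (s * Un n s z)) atTop
        (nhds (U s + Complex.exp (s * U s))) :=
      (hU s).add (((hU s).const_mul s).cexp)
    rw [h2] at h1
    have h4 := tendsto_nhds_unique h1 h3
    rw [h4]
    ring
end

section
/- For fixed z with Re(z) > 0 and fixed s ∈ ℂ, U(s − n, z) → z as n → ∞ along natural numbers. -/
open Complex Metric Filter Topology

theorem stmt_10 (z : ℂ) (hz : 0 < z.re) (s : ℂ) (U : ℂ → ℂ → ℂ)
    (hU : ∀ (s w : ℂ), 0 < w.re → Tendsto (fun n => Un n s w) atTop (nhds (U s w))) :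
    Tendsto (fun n : ℕ => U (s - (n : ℂ)) z) atTop (nhds z) := by
  set δ : ℝ := z.re / 2 with hδdef
  have hδ : 0 < δ := by positivity
  set A : ℝ := ‖s‖ * (‖z‖ + δ) with hAdef
  have hc : 0 < 1 - Real.exp (-δ) := by
    have : Real.exp (-δ) < 1 := Real.exp_lt_one_iff.mpr (neg_lt_zero.mpr hδ)
    linarith
  set B : ℕ → ℝ := fun m => Real.exp (A - ((m : ℝ) + 1) * δ) / (1 - Real.exp (-δ)) with hBdef
  have hBpos : ∀ m, 0 < B m := fun m => div_pos (Real.exp_pos _) hc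
  have hBrec : ∀ m : ℕ, B m = Real.exp (A - ((m : ℝ) + 1) * δ) + B (m + 1) := by
    intro m
    have h2 : Real.exp (A - (((m : ℕ) + 1 : ℕ) : ℝ) * δ - δ)
        = Real.exp (A - ((m : ℝ) + 1) * δ) * Real.exp (-δ) := by
      rw [← Real.exp_add]; push_cast; ring_nf
    simp only [hBdef]
    push_cast
    rw [show A - ((m : ℝ) + 1 + 1) * δ = A - (((m : ℕ) + 1 : ℕ) : ℝ) * δ - δ by push_cast; ring,
      h2]
    field_simp
    ring
  have hB0 : Tendsto B atTop (nhds 0) := by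
    have h1 : Tendsto (fun m : ℕ => (m : ℝ)) atTop atTop := tendsto_natCast_atTop_atTop
    have h2 : Tendsto (fun m : ℕ => δ * (m : ℝ)) atTop atTop := h1.const_mul_atTop hδ
    have h3 : Tendsto (fun m : ℕ => A - ((m : ℝ) + 1) * δ) atTop atBot := by
      have h4 := tendsto_atBot_add_const_left atTop (A - δ) (tendsto_neg_atTop_atBot.comp h2)
      convert h4 using 2 with m
      simp; ring
    have h5 : Tendsto (fun m : ℕ => Real.exp (A - ((m : ℝ) + 1) * δ)) atTop (nhds 0) :=
      Real.tendsto_exp_atBot.comp h3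
    have := h5.div_const (1 - Real.exp (-δ))
    simpa using this
  obtain ⟨M, hM⟩ : ∃ M, ∀ m ≥ M, B m ≤ δ := by
    have := (hB0.eventually_lt_const hδ).mono fun m h => h.le
    exact eventually_atTop.mp this
  have key : ∀ n : ℕ, ∀ m : ℕ, M ≤ m → ‖Un n (s - (m : ℂ)) z - z‖ ≤ B m := by
    intro n
    induction n with
    | zero => intro m hm; simp [Un]; exact (hBpos m).le
    | succ n ih =>
      intro m hm
      have hm1 : M ≤ m + 1 := le_trans hm (Nat.le_succ m)
      have hcast : s - ((m : ℕ) : ℂ) - 1 = s - (((m + 1 : ℕ) : ℕ) : ℂ) := by push_cast; ring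
      have hwz : ‖Un n (s - ((m + 1 : ℕ) : ℂ)) z - z‖ ≤ B (m + 1) := ih (m + 1) hm1
      set w := Un n (s - ((m + 1 : ℕ) : ℂ)) z with hw
      have hwzδ : ‖w - z‖ ≤ δ := hwz.trans (hM (m + 1) hm1)
      have habsw : ‖w‖ ≤ ‖z‖ + δ := by
        calc ‖w‖ = ‖z + (w - z)‖ := by ring_nf
          _ ≤ ‖z‖ + ‖w - z‖ := norm_add_le _ _
          _ ≤ ‖z‖ + δ := by linarith
      have hrew : δ ≤ w.re := by
        have h1 : |(w - z).re| ≤ ‖w - z‖ := Complex.abs_re_le_norm _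
        have h2 : w.re = z.re + (w - z).re := by simp
        have : -δ ≤ (w - z).re := by
          have := neg_abs_le (w - z).re
          linarith
        rw [h2]; rw [hδdef] at *; linarith
      have hexp : ‖Complex.exp ((s - (((m + 1 : ℕ)) : ℂ)) * w)‖
          ≤ Real.exp (A - ((m : ℝ) + 1) * δ) := by
        rw [Complex.norm_exp]
        apply Real.exp_le_exp.mpr
        have h1 : ((s - (((m + 1 : ℕ)) : ℂ)) * w).re = (s * w).re - ((m : ℝ) + 1) * w.re := by
          push_cast
          simp [Complex.sub_re, Complex.mul_re]
          ring
        rw [h1]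
        have h2 : (s * w).re ≤ A := by
          calc (s * w).re ≤ |( s * w).re| := le_abs_self _
            _ ≤ ‖s * w‖ := Complex.abs_re_le_norm _
            _ = ‖s‖ * ‖w‖ := norm_mul _ _
            _ ≤ ‖s‖ * (‖z‖ + δ) := by
                apply mul_le_mul_of_nonneg_left habsw (norm_nonneg _)
            _ = A := hAdef.symm
        have h3 : ((m : ℝ) + 1) * δ ≤ ((m : ℝ) + 1) * w.re := by
          apply mul_le_mul_of_nonneg_left hrew
          positivity
        linarith
      have hrec : Un (n + 1) (s - (m : ℂ)) z
          = w + Complex.exp ((s - (((m + 1 : ℕ)) : ℂ)) * w) := by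
        show Un n (s - (m : ℂ) - 1) z + Complex.exp ((s - (m : ℂ) - 1) * Un n (s - (m : ℂ) - 1) z)
          = _
        rw [hcast]
      rw [hrec]
      calc ‖w + Complex.exp ((s - (((m + 1 : ℕ)) : ℂ)) * w) - z‖
          = ‖(w - z) + Complex.exp ((s - (((m + 1 : ℕ)) : ℂ)) * w)‖ := by ring_nf
        _ ≤ ‖w - z‖ + ‖Complex.exp ((s - (((m + 1 : ℕ)) : ℂ)) * w)‖ :=
            norm_add_le _ _
        _ ≤ B (m + 1) + Real.exp (A - ((m : ℝ) + 1) * δ) := add_le_add hwz hexp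
        _ = B m := by rw [hBrec m]; ring
  have hdist : ∀ m : ℕ, M ≤ m → dist (U (s - (m : ℂ)) z) z ≤ B m := by
    intro m hm
    have hT : Tendsto (fun n => dist (Un n (s - (m : ℂ)) z) z) atTop
        (nhds (dist (U (s - (m : ℂ)) z) z)) :=
      (hU (s - (m : ℂ)) z hz).dist tendsto_const_nhds
    refine le_of_tendsto hT (Filter.Eventually.of_forall fun n => ?_)
    rw [Complex.dist_eq]
    exact key n m hm
  rw [tendsto_iff_dist_tendsto_zero]
  apply squeeze_zero' (Filter.Eventually.of_forall fun n => dist_nonneg)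
    (eventually_atTop.mpr ⟨M, hdist⟩) hB0
end

section
/- Fix z with Re(z) > 0. Then U(s,z) → z as |s| → ∞ within any closed subsector π/2 < κ ≤ |arg(sz)| ≤ π. -/
open Complex Metric Filter Topology

lemma key_bound (z : ℂ) (A : ℝ)
    (hA : Real.exp (1 - A / 2) ≤ Real.exp (z.re / 2) - 1) :
    ∀ n : ℕ, ∀ s : ℂ, (s * z).re ≤ -A → ‖s‖ * Real.exp ((s * z).re / 2) ≤ 1 →
      ‖Un n s z - z‖ ≤ Real.exp ((s * z).re / 2) := by
  have hr : 0 < z.re := by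
    by_contra h
    push_neg at h
    have h1 : Real.exp (z.re / 2) ≤ 1 := Real.exp_le_one_iff.mpr (by linarith)
    have h2 : 0 < Real.exp (1 - A / 2) := Real.exp_pos _
    linarith
  intro n
  induction n with
  | zero =>
    intro s _ _
    simp only [Un, sub_self, norm_zero]
    positivity
  | succ n ih =>
    intro s hs1 hs2
    have ht : ((s - 1) * z).re = (s * z).re - z.re := by
      simp [sub_mul, Complex.sub_re]
    have hAd : Real.exp (-A / 2) ≤ Real.exp (z.re / 2) - 1 :=
      le_trans (Real.exp_le_exp.mpr (by linarith)) hA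
    have hexpA : Real.exp ((s * z).re / 2) ≤ Real.exp (-A / 2) :=
      Real.exp_le_exp.mpr (by linarith)
    have h1' : ((s - 1) * z).re ≤ -A := by rw [ht]; linarith
    have hns : ‖s - 1‖ ≤ ‖s‖ + 1 := by
      calc ‖s - 1‖ ≤ ‖s‖ + ‖(1 : ℂ)‖ := norm_sub_le _ _
        _ = ‖s‖ + 1 := by simp
    have hexpt : Real.exp (((s - 1) * z).re / 2)
        = Real.exp (-z.re / 2) * Real.exp ((s * z).re / 2) := by
      rw [← Real.exp_add, ht]; ring_nf
    have h2' : ‖s - 1‖ * Real.exp (((s - 1) * z).re / 2) ≤ 1 := by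
      have hpos : (0 : ℝ) < Real.exp (((s - 1) * z).re / 2) := Real.exp_pos _
      calc ‖s - 1‖ * Real.exp (((s - 1) * z).re / 2)
          ≤ (‖s‖ + 1) * Real.exp (((s - 1) * z).re / 2) :=
            mul_le_mul_of_nonneg_right hns hpos.le
        _ = Real.exp (-z.re / 2) *
            (‖s‖ * Real.exp ((s * z).re / 2) + Real.exp ((s * z).re / 2)) := by
            rw [hexpt]; ring
        _ ≤ Real.exp (-z.re / 2) * (1 + (Real.exp (z.re / 2) - 1)) := by
            refine mul_le_mul_of_nonneg_left ?_ (Real.exp_pos _).le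
            have := le_trans hexpA hAd
            linarith
        _ = 1 := by
            have he : -z.re / 2 + z.re / 2 = 0 := by ring
            rw [add_sub_cancel, ← Real.exp_add, he, Real.exp_zero]
    have hw := ih (s - 1) h1' h2'
    set w := Un n (s - 1) z with hwdef
    have hsplit : (s - 1) * w = (s - 1) * z + (s - 1) * (w - z) := by ring
    have hre : ((s - 1) * w).re ≤ ((s - 1) * z).re + 1 := by
      rw [hsplit, Complex.add_re]
      have h3 : ((s - 1) * (w - z)).re ≤ ‖(s - 1) * (w - z)‖ := Complex.re_le_norm _
      have h4 : ‖(s - 1) * (w - z)‖ = ‖s - 1‖ * ‖w - z‖ := norm_mul _ _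
      have h5 : ‖s - 1‖ * ‖w - z‖ ≤ ‖s - 1‖ * Real.exp (((s - 1) * z).re / 2) :=
        mul_le_mul_of_nonneg_left hw (norm_nonneg _)
      linarith
    have hnormexp : ‖Complex.exp ((s - 1) * w)‖ ≤ Real.exp (((s - 1) * z).re + 1) := by
      rw [Complex.norm_exp]
      exact Real.exp_le_exp.mpr hre
    have hUn : Un (n + 1) s z = w + Complex.exp ((s - 1) * w) := rfl
    have hfin : ‖Un (n + 1) s z - z‖ ≤
        Real.exp (((s - 1) * z).re / 2) + Real.exp (((s - 1) * z).re + 1) := by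
      rw [hUn]
      calc ‖w + Complex.exp ((s - 1) * w) - z‖
          = ‖(w - z) + Complex.exp ((s - 1) * w)‖ := by ring_nf
        _ ≤ ‖w - z‖ + ‖Complex.exp ((s - 1) * w)‖ := norm_add_le _ _
        _ ≤ _ := add_le_add hw hnormexp
    have hkey : Real.exp (((s - 1) * z).re / 2) + Real.exp (((s - 1) * z).re + 1)
        ≤ Real.exp ((s * z).re / 2) := by
      have e1 : Real.exp (((s - 1) * z).re + 1)
          = Real.exp (((s - 1) * z).re / 2) * Real.exp (((s - 1) * z).re / 2 + 1) := by
        rw [← Real.exp_add]; ring_nf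
      have e2 : Real.exp (((s - 1) * z).re / 2 + 1) ≤ Real.exp (1 - A / 2) :=
        Real.exp_le_exp.mpr (by rw [ht]; linarith)
      have e3 : Real.exp ((s * z).re / 2)
          = Real.exp (((s - 1) * z).re / 2) * Real.exp (z.re / 2) := by
        rw [← Real.exp_add, ht]; ring_nf
      have hpos : (0 : ℝ) < Real.exp (((s - 1) * z).re / 2) := Real.exp_pos _
      rw [e1, e3]
      nlinarith [le_trans e2 hA]
    linarith

theorem stmt_11 (z : ℂ) (hz : 0 < z.re) (U : ℂ → ℂ → ℂ)
    (hU : ∀ (s w : ℂ), 0 < w.re → Tendsto (fun n => Un n s w) atTop (nhds (U s w))) :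
    ∀ κ : ℝ, Real.pi / 2 < κ →
      ∀ ε > (0 : ℝ), ∃ R : ℝ, ∀ s : ℂ,
        κ ≤ |(s * z).arg| → R ≤ ‖s‖ → ‖U s z - z‖ < ε := by
  intro κ hκ ε hε
  by_cases hκπ : κ ≤ Real.pi
  swap
  · exact ⟨0, fun s harg _ => absurd (le_trans harg (Complex.abs_arg_le_pi _)) hκπ⟩
  have hz0 : z ≠ 0 := fun h => by simp [h] at hz
  have hnz : 0 < ‖z‖ := norm_pos_iff.mpr hz0
  have hπ : 0 < Real.pi := Real.pi_pos
  have hcos : Real.cos κ < 0 :=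
    Real.cos_neg_of_pi_div_two_lt_of_lt hκ (by linarith)
  set c : ℝ := -Real.cos κ with hc
  have hcpos : 0 < c := by simp only [hc]; linarith
  set β : ℝ := c * ‖z‖ / 2 with hβ
  have hβpos : 0 < β := by positivity
  set d : ℝ := Real.exp (z.re / 2) - 1 with hd
  have hdpos : 0 < d := by
    have := Real.add_one_le_exp (z.re / 2)
    simp only [hd]; linarith
  set A : ℝ := 2 * (1 - Real.log d) with hAdef
  have hA : Real.exp (1 - A / 2) ≤ Real.exp (z.re / 2) - 1 := by
    have h1 : 1 - A / 2 = Real.log d := by rw [hAdef]; ring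
    rw [h1, Real.exp_log hdpos]
  have htend : Tendsto (fun x : ℝ => β * x) atTop atTop :=
    tendsto_id.const_mul_atTop hβpos
  have hexp0 : Tendsto (fun x : ℝ => Real.exp (-(β * x))) atTop (𝓝 0) :=
    Real.tendsto_exp_neg_atTop_nhds_zero.comp htend
  have hxexp : Tendsto (fun x : ℝ => x * Real.exp (-(β * x))) atTop (𝓝 0) := by
    have h0 : Tendsto (fun x : ℝ => (β * x) ^ 1 * Real.exp (-(β * x))) atTop (𝓝 0) :=
      (Real.tendsto_pow_mul_exp_neg_atTop_nhds_zero 1).comp htend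
    have h1 := h0.const_mul (1 / β)
    simp only [mul_zero] at h1
    refine h1.congr fun x => ?_
    field_simp
  have h1 : ∀ᶠ x : ℝ in atTop, A ≤ 2 * β * x := by
    have : Tendsto (fun x : ℝ => 2 * β * x) atTop atTop :=
      tendsto_id.const_mul_atTop (by positivity)
    exact this.eventually_ge_atTop A
  have h2 : ∀ᶠ x : ℝ in atTop, x * Real.exp (-(β * x)) ≤ 1 :=
    (hxexp.eventually (gt_mem_nhds (by norm_num : (0:ℝ) < 1))).mono fun x hx => hx.le
  have h3 : ∀ᶠ x : ℝ in atTop, Real.exp (-(β * x)) < ε :=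
    hexp0.eventually (gt_mem_nhds hε)
  have h4 : ∀ᶠ x : ℝ in atTop, (1 : ℝ) ≤ x := eventually_ge_atTop 1
  obtain ⟨R, hR⟩ := Filter.eventually_atTop.mp (h1.and (h2.and (h3.and h4)))
  refine ⟨R, fun s harg hsR => ?_⟩
  obtain ⟨hA1, hA2, hA3, hA4⟩ := hR ‖s‖ hsR
  have hs0 : s ≠ 0 := by
    intro h
    rw [h, norm_zero] at hA4
    linarith
  have hsz0 : s * z ≠ 0 := mul_ne_zero hs0 hz0
  have hκ0 : 0 ≤ κ := le_trans (by positivity) hκ.le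
  have hcosarg : Real.cos (s * z).arg ≤ Real.cos κ := by
    rw [← Real.cos_abs]
    exact Real.cos_le_cos_of_nonneg_of_le_pi hκ0 (Complex.abs_arg_le_pi _) harg
  have hre : (s * z).re ≤ -(2 * β * ‖s‖) := by
    have h5 : (s * z).re = ‖s * z‖ * Real.cos (s * z).arg := by
      have habs : (0 : ℝ) < ‖s * z‖ := norm_pos_iff.mpr hsz0
      rw [Complex.cos_arg hsz0]
      exact ((mul_comm ‖s * z‖ _).trans (div_mul_cancel₀ _ habs.ne')).symm
    calc (s * z).re = ‖s * z‖ * Real.cos (s * z).arg := h5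
      _ ≤ ‖s * z‖ * Real.cos κ :=
          mul_le_mul_of_nonneg_left hcosarg (norm_nonneg _)
      _ = ‖s‖ * ‖z‖ * Real.cos κ := by
          rw [norm_mul]
      _ = -(2 * β * ‖s‖) := by rw [hβ, hc]; ring
  have hre1 : (s * z).re ≤ -A := by nlinarith [norm_nonneg s]
  have hre2 : Real.exp ((s * z).re / 2) ≤ Real.exp (-(β * ‖s‖)) :=
    Real.exp_le_exp.mpr (by linarith)
  have hb : ∀ n, ‖Un n s z - z‖ ≤ Real.exp ((s * z).re / 2) := by
    intro n
    refine key_bound z A hA n s hre1 ?_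
    calc ‖s‖ * Real.exp ((s * z).re / 2) ≤ ‖s‖ * Real.exp (-(β * ‖s‖)) :=
          mul_le_mul_of_nonneg_left hre2 (norm_nonneg _)
      _ ≤ 1 := hA2
  have hlim := hU s z hz
  have hnormlim : Tendsto (fun n => ‖Un n s z - z‖) atTop (𝓝 ‖U s z - z‖) :=
    (hlim.sub tendsto_const_nhds).norm
  have hle : ‖U s z - z‖ ≤ Real.exp ((s * z).re / 2) :=
    le_of_tendsto hnormlim (Filter.Eventually.of_forall hb)
  calc ‖U s z - z‖ ≤ Real.exp ((s * z).re / 2) := hle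
    _ ≤ Real.exp (-(β * ‖s‖)) := hre2
    _ < ε := hA3
end

section
/- Fix z with Re(z) > 0. Then (U(s+1,z) − U(s,z))/e^{sz} → 1 as |s| → ∞ in any closed subsector π/2 < κ ≤ |arg(sz)| ≤ π; equivalently U(s+1) − U(s) ∼ e^{sz} there. -/
open Complex Metric Filter Topology

lemma key (z s : ℂ) (ha : 0 < z.re)
    (H : ∀ m : ℕ, 1 ≤ m →
      (‖s‖ + m) * (Real.exp (s*z).re * Real.exp (-(z.re/2)) ^ (m+1) / (1 - Real.exp (-(z.re/2))))
        ≤ m * z.re / 2) :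
    ∀ n j : ℕ, ‖Un n (s - (j:ℂ)) z - z‖ ≤
      Real.exp (s*z).re * Real.exp (-(z.re/2)) ^ (j+1) / (1 - Real.exp (-(z.re/2))) := by
  set q : ℝ := Real.exp (-(z.re/2)) with hq
  have hq0 : 0 < q := Real.exp_pos _
  have hq1 : q < 1 := Real.exp_lt_one_iff.mpr (by linarith)
  intro n
  induction n with
  | zero =>
    intro j
    simp only [Un, sub_self, norm_zero]
    have h1q : (0:ℝ) < 1 - q := by linarith
    positivity
  | succ n ih =>
    intro j
    have hcast : s - (j:ℂ) - 1 = s - ((j+1 : ℕ) : ℂ) := by push_cast; ring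
    have hrec : Un (n+1) (s - (j:ℂ)) z
        = Un n (s - ((j+1:ℕ):ℂ)) z
          + Complex.exp ((s - ((j+1:ℕ):ℂ)) * Un n (s - ((j+1:ℕ):ℂ)) z) := by
      rw [show Un (n+1) (s - (j:ℂ)) z = Un n (s - (j:ℂ) - 1) z
          + Complex.exp ((s - (j:ℂ) - 1) * Un n (s - (j:ℂ) - 1) z) from rfl, hcast]
    set m : ℕ := j + 1 with hm
    set u : ℂ := Un n (s - ((m:ℕ):ℂ)) z with hu
    have hum : ‖u - z‖ ≤ Real.exp (s*z).re * q ^ (m+1) / (1 - q) := ih m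
    -- bound on the real part of the exponent
    have hsplit : (s - (m:ℂ)) * u = (s - (m:ℂ)) * z + (s - (m:ℂ)) * (u - z) := by ring
    have h1 : ((s - (m:ℂ)) * z).re = (s*z).re - m * z.re := by
      have : (s - (m:ℂ)) * z = s * z - (m:ℂ) * z := by ring
      rw [this, Complex.sub_re]
      simp [Complex.mul_re]
    have h2 : ((s - (m:ℂ)) * (u - z)).re ≤ (‖s‖ + m) * ‖u - z‖ := by
      calc ((s - (m:ℂ)) * (u - z)).re ≤ ‖(s - (m:ℂ)) * (u - z)‖ := Complex.re_le_norm _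
        _ = ‖s - (m:ℂ)‖ * ‖u - z‖ := by rw [norm_mul]
        _ ≤ (‖s‖ + m) * ‖u - z‖ := by
            apply mul_le_mul_of_nonneg_right _ (norm_nonneg _)
            calc ‖s - (m:ℂ)‖ ≤ ‖s‖ + ‖(m:ℂ)‖ := norm_sub_le _ _
              _ = ‖s‖ + m := by simp
    have hH := H m (by omega)
    have hexp_re : ((s - (m:ℂ)) * u).re ≤ (s*z).re - m * z.re / 2 := by
      have h3 : (‖s‖ + m) * ‖u - z‖ ≤ m * z.re / 2 := by
        refine le_trans (mul_le_mul_of_nonneg_left hum ?_) hH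
        positivity
      rw [hsplit, Complex.add_re, h1]
      linarith [le_trans h2 h3]
    have hexp : ‖Complex.exp ((s - (m:ℂ)) * u)‖ ≤ Real.exp (s*z).re * q ^ m := by
      rw [Complex.norm_exp]
      calc Real.exp (((s - (m:ℂ)) * u).re) ≤ Real.exp ((s*z).re - m * z.re / 2) :=
            Real.exp_le_exp.mpr hexp_re
        _ = Real.exp (s*z).re * q ^ m := by
            rw [Real.exp_sub, hq, ← Real.exp_nat_mul]
            rw [div_eq_mul_inv, ← Real.exp_neg]
            congr 1
            ring
    calc ‖Un (n+1) (s - (j:ℂ)) z - z‖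
        = ‖(u - z) + Complex.exp ((s - (m:ℂ)) * u)‖ := by rw [hrec]; ring_nf
      _ ≤ ‖u - z‖ + ‖Complex.exp ((s - (m:ℂ)) * u)‖ := norm_add_le _ _
      _ ≤ Real.exp (s*z).re * q ^ (m+1) / (1 - q) + Real.exp (s*z).re * q ^ m := by
          exact add_le_add hum hexp
      _ = Real.exp (s*z).re * q ^ (j+1) / (1 - q) := by
          have h1q : (1:ℝ) - q ≠ 0 := by linarith
          rw [hm]
          field_simp [h1q]
          ring

theorem stmt_12 (z : ℂ) (hz : 0 < z.re) (U : ℂ → ℂ → ℂ)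
    (hU : ∀ (s w : ℂ), 0 < w.re → Tendsto (fun n => Un n s w) atTop (nhds (U s w))) :
    ∀ κ : ℝ, Real.pi / 2 < κ →
      ∀ ε > (0 : ℝ), ∃ R : ℝ, ∀ s : ℂ,
        κ ≤ |(s * z).arg| → R ≤ ‖s‖ → ‖(U (s + 1) z - U s z) / Complex.exp (s * z) - 1‖ < ε := by
  -- functional equation
  have hfe : ∀ s : ℂ, U (s+1) z = U s z + Complex.exp (s * U s z) := by
    intro s
    have h1 := hU (s+1) z hz
    have h2 := hU s z hz
    have h3 : Tendsto (fun n => Un (n+1) (s+1) z) atTop (nhds (U (s+1) z)) :=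
      h1.comp (tendsto_add_atTop_nat 1)
    have h4 : (fun n => Un (n+1) (s+1) z)
        = fun n => Un n s z + Complex.exp (s * Un n s z) := by
      funext n
      show Un n (s+1-1) z + Complex.exp ((s+1-1) * Un n (s+1-1) z) = _
      rw [add_sub_cancel_right]
    rw [h4] at h3
    have h5 : Tendsto (fun n => Un n s z + Complex.exp (s * Un n s z)) atTop
        (nhds (U s z + Complex.exp (s * U s z))) :=
      h2.add ((Complex.continuous_exp.tendsto _).comp (h2.const_mul s))
    exact tendsto_nhds_unique h3 h5
  intro κ hκ ε hε
  by_cases hκπ : κ ≤ Real.pi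
  swap
  · exact ⟨0, fun s hs _ => absurd hs (not_le.mpr
      (lt_of_le_of_lt (Complex.abs_arg_le_pi _) (lt_of_not_ge hκπ)))⟩
  -- setup constants
  have hzne : z ≠ 0 := fun h => by simp [h] at hz
  have hznorm : 0 < ‖z‖ := norm_pos_iff.mpr hzne
  set a : ℝ := z.re with haq
  set q : ℝ := Real.exp (-(a/2)) with hq
  have hq0 : 0 < q := Real.exp_pos _
  have hq1 : q < 1 := Real.exp_lt_one_iff.mpr (by linarith)
  have h1q : (0:ℝ) < 1 - q := by linarith
  have hcos : Real.cos κ < 0 :=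
    Real.cos_neg_of_pi_div_two_lt_of_lt hκ (by linarith [Real.pi_pos])
  set c : ℝ := ‖z‖ * (-Real.cos κ) with hc
  have hc0 : 0 < c := mul_pos hznorm (by linarith)
  set T : ℝ := min 1 (ε/3) with hT
  have hT0 : 0 < T := lt_min one_pos (by linarith)
  set B : ℝ := min (a * (1-q) / 2) (T * (1-q) / q) with hB
  have hB0 : 0 < B := lt_min (div_pos (mul_pos hz h1q) two_pos) (div_pos (mul_pos hT0 h1q) hq0)
  -- the decay function
  have htend : Tendsto (fun r : ℝ => (r + 1) * Real.exp (-(c * r))) atTop (nhds 0) := by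
    have h1 : Tendsto (fun x : ℝ => (x / c + 1) * Real.exp (-x)) atTop (nhds 0) := by
      have ha' : Tendsto (fun x : ℝ => x / c * Real.exp (-x)) atTop (nhds 0) := by
        have := (Real.tendsto_pow_mul_exp_neg_atTop_nhds_zero 1).div_const c
        simpa [pow_one, div_mul_eq_mul_div, mul_div_assoc, mul_comm] using this
      have hb' : Tendsto (fun x : ℝ => Real.exp (-x)) atTop (nhds 0) :=
        Real.tendsto_exp_neg_atTop_nhds_zero
      have := ha'.add hb'
      simpa [add_mul, one_mul] using this
    have h2 : Tendsto (fun r : ℝ => c * r) atTop atTop :=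
      Tendsto.const_mul_atTop hc0 tendsto_id
    have h3 := h1.comp h2
    refine h3.congr fun r => ?_
    simp only [Function.comp_apply, mul_div_cancel_left₀ _ hc0.ne']
  obtain ⟨R₀, hR₀⟩ := eventually_atTop.mp (htend.eventually_lt_const hB0)
  refine ⟨max 1 R₀, fun s hsarg hsR => ?_⟩
  set r : ℝ := ‖s‖ with hr
  have hr1 : 1 ≤ r := le_trans (le_max_left _ _) hsR
  have hdecay : (r + 1) * Real.exp (-(c * r)) < B := hR₀ r (le_trans (le_max_right _ _) hsR)
  -- Re(sz) ≤ -c r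
  have hsz0 : s * z ≠ 0 := by
    intro h
    rcases mul_eq_zero.mp h with h | h
    · rw [h] at hr; simp at hr; linarith
    · exact hzne h
  have hRe : (s * z).re ≤ -(c * r) := by
    have harg : Real.cos (s*z).arg ≤ Real.cos κ := by
      rw [← Real.cos_abs]
      exact Real.cos_le_cos_of_nonneg_of_le_pi (by linarith [Real.pi_pos])
        (Complex.abs_arg_le_pi _) hsarg
    have habs : ‖s*z‖ ≠ 0 := norm_ne_zero_iff.mpr hsz0
    have h1 : (s*z).re = ‖s*z‖ * Real.cos (s*z).arg := by
      rw [Complex.cos_arg hsz0, mul_div_assoc',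
        mul_comm ‖s*z‖ ((s*z).re), mul_div_assoc, div_self habs, mul_one]
    rw [h1]
    calc ‖s*z‖ * Real.cos (s*z).arg ≤ ‖s*z‖ * Real.cos κ :=
          mul_le_mul_of_nonneg_left harg (norm_nonneg _)
      _ = -(c * r) := by rw [norm_mul, hc, hr]; ring
  have hexpRe : Real.exp (s*z).re ≤ Real.exp (-(c*r)) := Real.exp_le_exp.mpr hRe
  -- verify hypothesis H of key
  have hH : ∀ m : ℕ, 1 ≤ m →
      (‖s‖ + m) * (Real.exp (s*z).re * q ^ (m+1) / (1 - q)) ≤ m * a / 2 := by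
    intro m hm
    have hm1 : (1:ℝ) ≤ (m:ℝ) := by exact_mod_cast hm
    have hqm : q ^ (m+1) ≤ 1 := pow_le_one₀ hq0.le hq1.le
    have hqm0 : 0 < q ^ (m+1) := pow_pos hq0 _
    have h1 : r + (m:ℝ) ≤ (m:ℝ) * (r + 1) := by nlinarith
    have h2 : (r + 1) * Real.exp (-(c*r)) ≤ a * (1-q) / 2 :=
      le_trans hdecay.le (min_le_left _ _)
    have h3 : (r + 1) * Real.exp (s*z).re ≤ a * (1-q) / 2 := by
      nlinarith [Real.exp_pos (s*z).re]
    calc (‖s‖ + m) * (Real.exp (s*z).re * q ^ (m+1) / (1 - q))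
        ≤ (m:ℝ) * (r+1) * (Real.exp (s*z).re * q ^ (m+1) / (1 - q)) := by
          apply mul_le_mul_of_nonneg_right h1
          exact div_nonneg (by positivity) h1q.le
      _ ≤ (m:ℝ) * (a/2) := by
          rw [mul_assoc]
          apply mul_le_mul_of_nonneg_left _ (by linarith)
          rw [mul_div_assoc', div_le_iff₀ (by linarith : (0:ℝ) < 1 - q)]
          calc (r+1) * (Real.exp (s*z).re * q ^ (m+1))
              = ((r+1) * Real.exp (s*z).re) * q ^ (m+1) := by ring
            _ ≤ (a * (1-q)/2) * 1 := by
                apply mul_le_mul h3 hqm hqm0.le (div_nonneg (mul_pos hz h1q).le (by norm_num))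
            _ = a/2 * (1-q) := by ring
      _ = m * a / 2 := by ring
  -- bound ‖U s z - z‖
  have hUb : ‖U s z - z‖ ≤ Real.exp (s*z).re * q / (1 - q) := by
    have h6 : Tendsto (fun n => ‖Un n s z - z‖) atTop (nhds ‖U s z - z‖) :=
      ((hU s z hz).sub tendsto_const_nhds).norm
    refine le_of_tendsto' h6 fun n => ?_
    have := key z s hz hH n 0
    simpa using this
  -- bound ‖s * (U s z - z)‖ ≤ T
  have hw : ‖s * (U s z - z)‖ ≤ T := by
    rw [norm_mul, ← hr]
    have hq1q : (0:ℝ) ≤ q / (1 - q) := div_nonneg hq0.le h1q.le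
    have h2 : r * (Real.exp (s*z).re * q / (1-q))
        ≤ ((r+1) * Real.exp (-(c*r))) * (q/(1-q)) := by
      have heq : r * (Real.exp (s*z).re * q / (1-q))
          = (r * Real.exp (s*z).re) * (q/(1-q)) := by ring
      rw [heq]
      apply mul_le_mul_of_nonneg_right _ hq1q
      nlinarith [Real.exp_pos (s*z).re, Real.exp_pos (-(c*r)), hexpRe]
    have h3 : ((r+1) * Real.exp (-(c*r))) * (q/(1-q)) ≤ (T*(1-q)/q) * (q/(1-q)) :=
      mul_le_mul_of_nonneg_right (le_trans hdecay.le (min_le_right _ _)) hq1q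
    have h4 : (T*(1-q)/q) * (q/(1-q)) = T := by field_simp
    calc r * ‖U s z - z‖ ≤ r * (Real.exp (s*z).re * q / (1-q)) :=
          mul_le_mul_of_nonneg_left hUb (by linarith)
      _ ≤ T := by linarith
  -- conclude
  have hkey : (U (s + 1) z - U s z) / Complex.exp (s * z) - 1
      = Complex.exp (s * (U s z - z)) - 1 := by
    rw [hfe s]
    have : U s z + Complex.exp (s * U s z) - U s z = Complex.exp (s * U s z) := by ring
    rw [this, ← Complex.exp_sub]
    congr 2
    ring
  rw [hkey]
  have h1 : ‖s * (U s z - z)‖ ≤ 1 := by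
    exact le_trans hw (min_le_left _ _)
  have h2 := Complex.norm_exp_sub_one_le h1
  have h2' : ‖Complex.exp (s * (U s z - z)) - 1‖ ≤ 2 * ‖s * (U s z - z)‖ := by
    simpa using h2
  have h3 : ‖s * (U s z - z)‖ ≤ ε/3 := le_trans hw (min_le_right _ _)
  linarith
end

section
/- Fix z with Re(z) > 0. Then (U(s,z) − z)·(1 − e^{−z})/e^{(s−1)z} → 1 as |s| → ∞ in any closed subsector π/2 < κ ≤ |arg(sz)| ≤ π; i.e., U(s) − z ∼ e^{(s−1)z}/(1 − e^{−z}). -/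
open Complex Metric Filter Topology

lemma re_helper (s z : ℂ) (r : ℝ) : ((s - (r:ℂ)) * z).re = (s*z).re - r * z.re := by
  have h : (s - (r:ℂ)) * z = s * z - (r:ℂ) * z := by ring
  rw [h, Complex.sub_re]
  simp [Complex.ofReal_mul, Complex.mul_re, Complex.ofReal_re, Complex.ofReal_im]

lemma norm_helper (s : ℂ) (r : ℝ) (hr : 0 ≤ r) : ‖s - (r:ℂ)‖ ≤ ‖s‖ + r := by
  calc ‖s - (r:ℂ)‖ ≤ ‖s‖ + ‖(r:ℂ)‖ := norm_sub_le _ _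
  _ = ‖s‖ + r := by rw [Complex.norm_real, Real.norm_eq_abs, _root_.abs_of_nonneg hr]

lemma claim1 (z s : ℂ) (K η : ℝ)
    (hK : K = 2 / (1 - Real.exp (-z.re)))
    (hden : 0 < 1 - Real.exp (-z.re))
    (Hη : ∀ m : ℕ, (‖s‖ + ((m:ℝ) + 1)) * (K * Real.exp ((s*z).re - ((m:ℝ)+2) * z.re)) ≤ η)
    (hηlog : η ≤ Real.log 2) :
    ∀ n : ℕ, ∀ m : ℕ, ‖Un n (s - m) z - z‖ ≤ K * Real.exp ((s*z).re - ((m:ℝ)+1) * z.re) := by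
  have hKpos : 0 < K := by rw [hK]; positivity
  have hKe : K * (1 - Real.exp (-z.re)) = 2 := by rw [hK]; field_simp
  intro n
  induction n with
  | zero => intro m; simp only [Un, sub_self, norm_zero]; positivity
  | succ n ih =>
    intro m
    have h1 : Un (n+1) (s - m) z
        = Un n (s - m - 1) z + Complex.exp ((s - m - 1) * Un n (s - m - 1) z) := rfl
    have ih1 := ih (m+1)
    push_cast at ih1
    rw [h1, sub_sub s (m:ℂ) 1]
    set u := Un n (s - ((m:ℂ) + 1)) z with hu
    have hδ : ‖u - z‖ ≤ K * Real.exp ((s*z).re - ((m:ℝ)+1+1) * z.re) := ih1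
    have hnorm : ‖s - ((m:ℂ)+1)‖ ≤ ‖s‖ + ((m:ℝ)+1) := by
      have : ((m:ℂ)+1) = (((m:ℝ)+1 : ℝ) : ℂ) := by push_cast; ring
      rw [this]; exact norm_helper s _ (by positivity)
    have hre1 : ((s - ((m:ℂ)+1)) * z).re = (s*z).re - ((m:ℝ)+1) * z.re := by
      have : ((m:ℂ)+1) = (((m:ℝ)+1 : ℝ) : ℂ) := by push_cast; ring
      rw [this, re_helper]
    have hsmall : ‖s - ((m:ℂ)+1)‖ * ‖u - z‖ ≤ η := by
      calc ‖s - ((m:ℂ)+1)‖ * ‖u - z‖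
          ≤ (‖s‖ + ((m:ℝ)+1)) * (K * Real.exp ((s*z).re - ((m:ℝ)+2) * z.re)) := by
            apply mul_le_mul hnorm _ (norm_nonneg _) (by positivity)
            rw [show ((m:ℝ)+2) = (m:ℝ)+1+1 by ring]; exact hδ
        _ ≤ η := Hη m
    have hexpbound : ‖Complex.exp ((s - ((m:ℂ)+1)) * u)‖
        ≤ 2 * Real.exp ((s*z).re - ((m:ℝ)+1) * z.re) := by
      rw [Complex.norm_exp]
      have hsplit : (s - ((m:ℂ)+1)) * u = (s - ((m:ℂ)+1)) * z + (s - ((m:ℂ)+1)) * (u - z) := by ring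
      rw [hsplit, Complex.add_re]
      have h2 : ((s - ((m:ℂ)+1)) * (u - z)).re ≤ η := by
        calc ((s - ((m:ℂ)+1)) * (u - z)).re ≤ ‖(s - ((m:ℂ)+1)) * (u - z)‖ :=
            Complex.re_le_norm _
          _ = ‖s - ((m:ℂ)+1)‖ * ‖u - z‖ := by rw [norm_mul]
          _ ≤ η := hsmall
      calc Real.exp (((s - ((m:ℂ)+1)) * z).re + ((s - ((m:ℂ)+1)) * (u - z)).re)
          ≤ Real.exp (((s - ((m:ℂ)+1)) * z).re + Real.log 2) := by
            apply Real.exp_le_exp.mpr; linarith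
        _ = 2 * Real.exp ((s*z).re - ((m:ℝ)+1) * z.re) := by
            rw [Real.exp_add, Real.exp_log (by norm_num), hre1]; ring
    have key : u + Complex.exp ((s - ((m:ℂ)+1)) * u) - z
        = (u - z) + Complex.exp ((s - ((m:ℂ)+1)) * u) := by ring
    rw [key]
    calc ‖(u - z) + Complex.exp ((s - ((m:ℂ)+1)) * u)‖
        ≤ ‖u - z‖ + ‖Complex.exp ((s - ((m:ℂ)+1)) * u)‖ := norm_add_le _ _
      _ ≤ K * Real.exp ((s*z).re - ((m:ℝ)+1+1) * z.re)
          + 2 * Real.exp ((s*z).re - ((m:ℝ)+1) * z.re) := add_le_add hδ hexpbound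
      _ = K * Real.exp ((s*z).re - ((m:ℝ)+1) * z.re) := by
          have e1 : (s*z).re - ((m:ℝ)+1+1) * z.re = ((s*z).re - ((m:ℝ)+1) * z.re) + (-z.re) := by ring
          rw [e1, Real.exp_add]
          have E : (0:ℝ) < Real.exp ((s*z).re - ((m:ℝ)+1) * z.re) := Real.exp_pos _
          nlinarith [hKe]

noncomputable def gg (z s : ℂ) : ℂ := Complex.exp ((s - 1) * z) / (1 - Complex.exp (-z))

lemma gg_step (z t : ℂ) (hb : 1 - Complex.exp (-z) ≠ 0) :
    gg z t = gg z (t - 1) + Complex.exp ((t - 1) * z) := by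
  unfold gg
  rw [div_add' _ _ _ hb]
  congr 1
  have h1 : (t - 1 - 1) * z = (t - 1) * z + (-z) := by ring
  rw [h1, Complex.exp_add]
  ring

lemma claim2 (z s : ℂ) (K η ε'' : ℝ)
    (hK : K = 2 / (1 - Real.exp (-z.re)))
    (hden : 0 < 1 - Real.exp (-z.re))
    (hb : 1 - Complex.exp (-z) ≠ 0)
    (Hη : ∀ m : ℕ, (‖s‖ + ((m:ℝ) + 1)) * (K * Real.exp ((s*z).re - ((m:ℝ)+2) * z.re)) ≤ η)
    (hηlog : η ≤ Real.log 2)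
    (hηε : 2 * η ≤ ε'' * (1 - Real.exp (-z.re)))
    (hε : 0 ≤ ε'') :
    ∀ n : ℕ, ∀ m : ℕ, ‖Un n (s - m) z - z - (gg z (s - m) - gg z (s - m - n))‖
      ≤ ε'' * Real.exp ((s*z).re - ((m:ℝ)+1) * z.re) := by
  intro n
  induction n with
  | zero =>
    intro m
    simp only [Un, Nat.cast_zero, sub_zero, sub_self, norm_zero]
    positivity
  | succ n ih =>
    intro m
    have h1 : Un (n+1) (s - m) z
        = Un n (s - m - 1) z + Complex.exp ((s - m - 1) * Un n (s - m - 1) z) := rfl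
    have ih1 := ih (m+1)
    push_cast at ih1
    have hc1 := claim1 z s K η hK hden Hη hηlog n (m+1)
    push_cast at hc1
    rw [h1, sub_sub s (m:ℂ) 1]
    set u := Un n (s - ((m:ℂ) + 1)) z with hu
    -- algebraic identity
    have hgg : gg z (s - m) = gg z (s - ((m:ℂ)+1)) + Complex.exp ((s - ((m:ℂ)+1)) * z) := by
      have := gg_step z (s - m) hb
      rw [sub_sub s (m:ℂ) 1] at this
      exact this
    have hcast2 : s - (m:ℂ) - ((n:ℂ)+1) = s - ((m:ℂ)+1) - (n:ℂ) := by ring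
    have hiden : u + Complex.exp ((s - ((m:ℂ)+1)) * u) - z
          - (gg z (s - m) - gg z (s - m - ((n:ℕ)+1:ℕ)))
        = (u - z - (gg z (s - ((m:ℂ)+1)) - gg z (s - ((m:ℂ)+1) - n)))
          + (Complex.exp ((s - ((m:ℂ)+1)) * u) - Complex.exp ((s - ((m:ℂ)+1)) * z)) := by
      rw [hgg]
      push_cast
      rw [hcast2]
      ring
    rw [hiden]
    -- bound the second part
    have hre1 : ((s - ((m:ℂ)+1)) * z).re = (s*z).re - ((m:ℝ)+1) * z.re := by
      have : ((m:ℂ)+1) = (((m:ℝ)+1 : ℝ) : ℂ) := by push_cast; ring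
      rw [this, re_helper]
    have hnorm : ‖s - ((m:ℂ)+1)‖ ≤ ‖s‖ + ((m:ℝ)+1) := by
      have : ((m:ℂ)+1) = (((m:ℝ)+1 : ℝ) : ℂ) := by push_cast; ring
      rw [this]; exact norm_helper s _ (by positivity)
    have hδ : ‖u - z‖ ≤ K * Real.exp ((s*z).re - ((m:ℝ)+2) * z.re) := by
      convert hc1 using 3; ring
    have hsmall : ‖(s - ((m:ℂ)+1)) * (u - z)‖ ≤ η := by
      rw [norm_mul]
      calc ‖s - ((m:ℂ)+1)‖ * ‖u - z‖
          ≤ (‖s‖ + ((m:ℝ)+1)) * (K * Real.exp ((s*z).re - ((m:ℝ)+2) * z.re)) :=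
            mul_le_mul hnorm hδ (norm_nonneg _) (by positivity)
        _ ≤ η := Hη m
    have hη1 : η ≤ 1 := by
      have : Real.log 2 ≤ 1 := by
        calc Real.log 2 ≤ Real.log (Real.exp 1) := by
              apply Real.log_le_log (by norm_num)
              calc (2:ℝ) ≤ 2.7182818283 := by norm_num
                _ ≤ Real.exp 1 := Real.exp_one_gt_d9.le
          _ = 1 := Real.log_exp 1
      linarith
    have hexpdiff : ‖Complex.exp ((s - ((m:ℂ)+1)) * u) - Complex.exp ((s - ((m:ℂ)+1)) * z)‖
        ≤ ε'' * (1 - Real.exp (-z.re)) * Real.exp ((s*z).re - ((m:ℝ)+1) * z.re) := by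
      have hfact : Complex.exp ((s - ((m:ℂ)+1)) * u) - Complex.exp ((s - ((m:ℂ)+1)) * z)
          = Complex.exp ((s - ((m:ℂ)+1)) * z) * (Complex.exp ((s - ((m:ℂ)+1)) * (u - z)) - 1) := by
        rw [mul_sub, mul_one, ← Complex.exp_add]
        congr 2
        ring
      rw [hfact, norm_mul, Complex.norm_exp, hre1]
      have h2 : ‖Complex.exp ((s - ((m:ℂ)+1)) * (u - z)) - 1‖ ≤ 2 * η := by
        have := Complex.norm_exp_sub_one_le (x := (s - ((m:ℂ)+1)) * (u - z)) (by
          linarith)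
        calc ‖Complex.exp ((s - ((m:ℂ)+1)) * (u - z)) - 1‖
            ≤ 2 * ‖(s - ((m:ℂ)+1)) * (u - z)‖ := this
          _ ≤ 2 * η := by linarith
      calc Real.exp ((s*z).re - ((m:ℝ)+1) * z.re) * ‖Complex.exp ((s - ((m:ℂ)+1)) * (u - z)) - 1‖
          ≤ Real.exp ((s*z).re - ((m:ℝ)+1) * z.re) * (ε'' * (1 - Real.exp (-z.re))) := by
            apply mul_le_mul_of_nonneg_left _ (Real.exp_pos _).le
            linarith
        _ = ε'' * (1 - Real.exp (-z.re)) * Real.exp ((s*z).re - ((m:ℝ)+1) * z.re) := by ring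
    calc ‖(u - z - (gg z (s - ((m:ℂ)+1)) - gg z (s - ((m:ℂ)+1) - n)))
          + (Complex.exp ((s - ((m:ℂ)+1)) * u) - Complex.exp ((s - ((m:ℂ)+1)) * z))‖
        ≤ ‖u - z - (gg z (s - ((m:ℂ)+1)) - gg z (s - ((m:ℂ)+1) - n))‖
          + ‖Complex.exp ((s - ((m:ℂ)+1)) * u) - Complex.exp ((s - ((m:ℂ)+1)) * z)‖ := norm_add_le _ _
      _ ≤ ε'' * Real.exp ((s*z).re - ((m:ℝ)+1+1) * z.re)
          + ε'' * (1 - Real.exp (-z.re)) * Real.exp ((s*z).re - ((m:ℝ)+1) * z.re) := by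
          apply add_le_add _ hexpdiff
          convert ih1 using 3
      _ ≤ ε'' * Real.exp ((s*z).re - ((m:ℝ)+1) * z.re) := by
          have e1 : (s*z).re - ((m:ℝ)+1+1) * z.re = ((s*z).re - ((m:ℝ)+1) * z.re) + (-z.re) := by ring
          rw [e1, Real.exp_add]
          have E : (0:ℝ) < Real.exp ((s*z).re - ((m:ℝ)+1) * z.re) := Real.exp_pos _
          nlinarith

lemma exR (K C d η : ℝ) (hd : 0 < d) (hη : 0 < η) :
    ∃ R : ℝ, 1 ≤ R ∧ ∀ x : ℝ, R ≤ x → K * (x + C) * Real.exp (-(d * x)) ≤ η := by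
  have t1 : Tendsto (fun y : ℝ => y * Real.exp (-y)) atTop (nhds 0) := by
    simpa using Real.tendsto_pow_mul_exp_neg_atTop_nhds_zero 1
  have t2 : Tendsto (fun x : ℝ => d * x) atTop atTop := Tendsto.const_mul_atTop hd tendsto_id
  have t3 : Tendsto (fun x : ℝ => (d * x) * Real.exp (-(d * x))) atTop (nhds 0) := t1.comp t2
  have t4 : Tendsto (fun x : ℝ => Real.exp (-(d * x))) atTop (nhds 0) :=
    Real.tendsto_exp_neg_atTop_nhds_zero.comp t2
  have t5 : Tendsto (fun x : ℝ => K * (x + C) * Real.exp (-(d * x))) atTop (nhds 0) := by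
    have heq : (fun x : ℝ => K * (x + C) * Real.exp (-(d * x)))
        = fun x : ℝ => (K / d) * ((d * x) * Real.exp (-(d * x))) + (K * C) * Real.exp (-(d * x)) := by
      funext x
      field_simp
    rw [heq]
    have := (t3.const_mul (K / d)).add (t4.const_mul (K * C))
    simpa using this
  have h6 : ∀ᶠ x : ℝ in atTop, K * (x + C) * Real.exp (-(d * x)) < η :=
    t5.eventually (gt_mem_nhds hη)
  rcases eventually_atTop.mp h6 with ⟨R₀, hR₀⟩
  exact ⟨max R₀ 1, le_max_right _ _, fun x hx =>
    (hR₀ x (le_trans (le_max_left _ _) hx)).le⟩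

lemma Heta_of (a d K η x t : ℝ) (ha : 0 < a) (hK : 0 < K)
    (hx : t ≤ -(d * x)) (hxR : K * (x + 1 / a) * Real.exp (-(d * x)) ≤ η) (hxpos : 0 ≤ x) :
    ∀ m : ℕ, (x + ((m:ℝ) + 1)) * (K * Real.exp (t - ((m:ℝ) + 2) * a)) ≤ η := by
  intro m
  set M := (m:ℝ) with hM
  have h0 : (0:ℝ) ≤ M := Nat.cast_nonneg m
  set e := Real.exp (-((M + 2) * a)) with he
  have hepos : 0 < e := Real.exp_pos _
  have e1 : Real.exp (t - (M + 2) * a) = Real.exp t * e := by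
    rw [he, ← Real.exp_add]; ring_nf
  have e2 : Real.exp t ≤ Real.exp (-(d * x)) := Real.exp_le_exp.mpr hx
  have e4 : e ≤ 1 := by
    rw [he, ← Real.exp_zero]
    apply Real.exp_le_exp.mpr
    nlinarith
  have e3 : (M + 1) * e ≤ 1 / a := by
    have h4 : (M + 1) * a + 1 ≤ Real.exp ((M + 1) * a) := Real.add_one_le_exp _
    have h5 : e ≤ Real.exp (-((M + 1) * a)) := Real.exp_le_exp.mpr (by nlinarith)
    have hE : 0 < Real.exp ((M + 1) * a) := Real.exp_pos _
    have h7 : (M + 1) * Real.exp (-((M + 1) * a)) ≤ 1 / a := by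
      rw [Real.exp_neg, mul_comm, ← div_eq_inv_mul, div_le_div_iff₀ hE ha]
      nlinarith
    calc (M + 1) * e ≤ (M + 1) * Real.exp (-((M + 1) * a)) :=
          mul_le_mul_of_nonneg_left h5 (by linarith)
      _ ≤ 1 / a := h7
  calc (x + (M + 1)) * (K * Real.exp (t - (M + 2) * a))
      = K * Real.exp t * (x * e + (M + 1) * e) := by rw [e1]; ring
    _ ≤ K * Real.exp t * (x + 1 / a) := by
        apply mul_le_mul_of_nonneg_left _ (by positivity)
        have : x * e ≤ x := by nlinarith
        linarith
    _ ≤ K * Real.exp (-(d * x)) * (x + 1 / a) := by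
        apply mul_le_mul_of_nonneg_right _ (by positivity)
        exact mul_le_mul_of_nonneg_left e2 hK.le
    _ = K * (x + 1 / a) * Real.exp (-(d * x)) := by ring
    _ ≤ η := hxR

theorem stmt_13 (z : ℂ) (hz : 0 < z.re) (U : ℂ → ℂ → ℂ)
    (hU : ∀ (s w : ℂ), 0 < w.re → Tendsto (fun n => Un n s w) atTop (nhds (U s w))) :
    ∀ κ : ℝ, Real.pi / 2 < κ →
      ∀ ε > (0 : ℝ), ∃ R : ℝ, ∀ s : ℂ,
        κ ≤ |(s * z).arg| → R ≤ ‖s‖ → ‖(U s z - z) * (1 - Complex.exp (-z)) / Complex.exp ((s - 1) * z) - 1‖ < ε := by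
  intro κ hκ ε hε
  by_cases hκπ : κ ≤ Real.pi
  swap
  · exact ⟨0, fun s hs _ => absurd (le_trans hs (Complex.abs_arg_le_pi _)) hκπ⟩
  -- setup constants
  have hz0 : z ≠ 0 := fun h => by simp [h] at hz
  set a := z.re with haeq
  have hcos : Real.cos κ < 0 := by
    apply Real.cos_neg_of_pi_div_two_lt_of_lt hκ
    have := Real.pi_pos
    linarith
  set d := (-Real.cos κ) * ‖z‖ with hdeq
  have hd : 0 < d := mul_pos (by linarith) (norm_pos_iff.mpr hz0)
  have hden : 0 < 1 - Real.exp (-a) := by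
    have : Real.exp (-a) < 1 := Real.exp_lt_one_iff.mpr (by linarith)
    linarith
  have hbne : 1 - Complex.exp (-z) ≠ 0 := by
    intro h
    have h1 : Complex.exp (-z) = 1 := by
      have := sub_eq_zero.mp h
      exact this.symm
    have h2 : ‖Complex.exp (-z)‖ = Real.exp (-a) := by
      rw [Complex.norm_exp, Complex.neg_re]
    rw [h1] at h2
    simp at h2
    linarith
  set b := ‖1 - Complex.exp (-z)‖ with hbeq
  have hbpos : 0 < b := norm_pos_iff.mpr hbne
  set K := 2 / (1 - Real.exp (-a)) with hKeq
  have hKpos : 0 < K := by positivity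
  set ε'' := ε / (2 * b) with hε''eq
  have hε''pos : 0 < ε'' := by positivity
  set η := min (Real.log 2) (ε'' * (1 - Real.exp (-a)) / 2) with hηeq
  have hηpos : 0 < η := lt_min (Real.log_pos one_lt_two) (by positivity)
  obtain ⟨R, hR1, hRprop⟩ := exR K (1 / a) d η hd hηpos
  refine ⟨R, fun s hargs hRs => ?_⟩
  -- basic facts about s
  have hs0 : s ≠ 0 := by
    intro h
    rw [h, norm_zero] at hRs
    linarith
  have hsz0 : s * z ≠ 0 := mul_ne_zero hs0 hz0
  -- Re (s z) ≤ -(d ‖s‖)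
  have hszre : (s * z).re ≤ -(d * ‖s‖) := by
    have habs : ‖s * z‖ ≠ 0 := norm_ne_zero_iff.mpr hsz0
    have h1 : (s * z).re = ‖s * z‖ * Real.cos ((s * z).arg) := by
      rw [Complex.cos_arg hsz0, mul_div_cancel₀ _ habs]
    have h2 : Real.cos ((s * z).arg) ≤ Real.cos κ := by
      rw [← Real.cos_abs]
      exact Real.cos_le_cos_of_nonneg_of_le_pi (by linarith [Real.pi_pos])
        (Complex.abs_arg_le_pi _) hargs
    have h3 : ‖s * z‖ = ‖s‖ * ‖z‖ := by
      rw [norm_mul]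
    calc (s * z).re = ‖s * z‖ * Real.cos ((s * z).arg) := h1
      _ ≤ ‖s * z‖ * Real.cos κ := by
          apply mul_le_mul_of_nonneg_left h2 (norm_nonneg _)
      _ = -(d * ‖s‖) := by rw [h3, hdeq]; ring
  -- the smallness hypothesis
  have Hη : ∀ m : ℕ, (‖s‖ + ((m:ℝ) + 1)) * (K * Real.exp ((s*z).re - ((m:ℝ)+2) * a)) ≤ η :=
    Heta_of a d K η ‖s‖ ((s*z).re) hz hKpos hszre (hRprop ‖s‖ hRs) (norm_nonneg s)
  have hηlog : η ≤ Real.log 2 := min_le_left _ _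
  have hηε : 2 * η ≤ ε'' * (1 - Real.exp (-a)) := by
    have := min_le_right (Real.log 2) (ε'' * (1 - Real.exp (-a)) / 2)
    rw [← hηeq] at this
    linarith
  -- claim 2 at m = 0
  have hcl2 := claim2 z s K η ε'' hKeq hden hbne Hη hηlog hηε hε''pos.le
  have hcl2' : ∀ n : ℕ, ‖Un n s z - z - (gg z s - gg z (s - n))‖
      ≤ ε'' * Real.exp ((s*z).re - a) := by
    intro n
    have := hcl2 n 0
    simp only [Nat.cast_zero, sub_zero] at this
    convert this using 3
    norm_num [haeq]
  -- limits
  have hUn : Tendsto (fun n => Un n s z) atTop (nhds (U s z)) := hU s z hz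
  have hgtail : Tendsto (fun n : ℕ => gg z (s - n)) atTop (nhds 0) := by
    have hggpow : ∀ n : ℕ, gg z (s - n) = gg z s * (Complex.exp (-z)) ^ n := by
      intro n
      unfold gg
      rw [show (s - (n:ℂ) - 1) * z = (s - 1) * z + (n:ℂ) * (-z) by ring,
        Complex.exp_add, Complex.exp_nat_mul]
      ring
    have hlt : ‖Complex.exp (-z)‖ < 1 := by
      rw [Complex.norm_exp, Complex.neg_re]
      exact Real.exp_lt_one_iff.mpr (by linarith)
    have := (tendsto_pow_atTop_nhds_zero_of_norm_lt_one hlt).const_mul (gg z s)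
    simp only [mul_zero] at this
    exact Tendsto.congr (fun n => (hggpow n).symm) this
  have hE : Tendsto (fun n : ℕ => Un n s z - z - (gg z s - gg z (s - n))) atTop
      (nhds (U s z - z - (gg z s - 0))) :=
    ((hUn.sub_const z).sub (tendsto_const_nhds.sub hgtail))
  have hbound : ‖U s z - z - gg z s‖ ≤ ε'' * Real.exp ((s*z).re - a) := by
    have := le_of_tendsto hE.norm (Filter.Eventually.of_forall hcl2')
    simpa using this
  -- final computation
  have hexpne : Complex.exp ((s - 1) * z) ≠ 0 := Complex.exp_ne_zero _
  have key : (U s z - z) * (1 - Complex.exp (-z)) / Complex.exp ((s - 1) * z) - 1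
      = (U s z - z - gg z s) * (1 - Complex.exp (-z)) / Complex.exp ((s - 1) * z) := by
    unfold gg
    field_simp
  rw [key]
  have hXre : ((s - 1) * z).re = (s*z).re - a := by
    rw [show (s - 1) * z = s * z - z by ring, Complex.sub_re]
  have hnormval : ‖(U s z - z - gg z s) * (1 - Complex.exp (-z)) / Complex.exp ((s - 1) * z)‖
      = ‖U s z - z - gg z s‖ * b / Real.exp ((s*z).re - a) := by
    rw [norm_div, norm_mul, Complex.norm_exp, hXre]
  rw [hnormval]
  have hXpos : (0:ℝ) < Real.exp ((s*z).re - a) := Real.exp_pos _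
  calc ‖U s z - z - gg z s‖ * b / Real.exp ((s*z).re - a)
      ≤ (ε'' * Real.exp ((s*z).re - a)) * b / Real.exp ((s*z).re - a) := by gcongr
    _ = ε'' * b := by field_simp
    _ = ε / 2 := by rw [hε''eq]; field_simp; try ring
    _ < ε := by linarith
end

section
/- Uniqueness under decay: fix z with Re(z) > 0. If y(s) is holomorphic, satisfies y(s+1) − y(s) = e^{s·y(s)}, and y(s) → z as Re(s) → −∞ (uniformly on compacts in Im(s)), then y(s) = U(s, z). -/
open Complex Metric Filter Topology

lemma Un_succ (n : ℕ) (s w : ℂ) :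
    Un (n+1) s w = Un n (s-1) w + Complex.exp ((s-1) * Un n (s-1) w) := rfl

lemma Un_cont (n : ℕ) : ∀ s : ℂ, Continuous (fun w => Un n s w) := by
  induction n with
  | zero => exact fun s => continuous_id
  | succ n ih =>
    intro s
    simp only [Un_succ]
    exact ((ih (s-1)).add ((continuous_const.mul (ih (s-1))).cexp))

lemma Un_comp (k m : ℕ) : ∀ s w : ℂ, Un (k + m) s w = Un k s (Un m (s - k) w) := by
  induction k with
  | zero => intro s w; simp [Un]
  | succ k ih =>
    intro s w
    have h1 : k + 1 + m = (k + m) + 1 := by omega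
    rw [h1, Un_succ, ih (s-1) w, Un_succ]
    have hcast : s - 1 - (k:ℂ) = s - ((k+1:ℕ):ℂ) := by push_cast; ring
    rw [hcast]

lemma y_Un (y : ℂ → ℂ) (hy_eq : ∀ s : ℂ, y (s + 1) - y s = Complex.exp (s * y s)) :
    ∀ (n : ℕ) (t : ℂ), Un n t (y (t - n)) = y t := by
  intro n
  induction n with
  | zero => intro t; simp [Un]
  | succ n ih =>
    intro t
    have hc : t - ((n+1:ℕ):ℂ) = (t - 1) - (n:ℂ) := by push_cast; ring
    rw [Un_succ, hc, ih (t-1)]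
    have h := hy_eq (t-1)
    rw [sub_add_cancel] at h
    linear_combination -h

lemma key_s16 (z : ℂ) (hz : 0 < z.re) (t : ℂ) (ht : t.re ≤ 0)
    (hsm : Real.exp (t.re * (z.re/2) + |t.im| * (|z.im| + z.re/2)) * Real.exp (-(z.re/2))
      / (1 - Real.exp (-(z.re/2))) ≤ z.re/4)
    (U : ℂ → ℂ → ℂ)
    (hU : ∀ (s w : ℂ), 0 < w.re → Tendsto (fun n => Un n s w) atTop (nhds (U s w)))
    (y : ℂ → ℂ)
    (hy_eq : ∀ s : ℂ, y (s + 1) - y s = Complex.exp (s * y s))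
    (hy_lim : ∀ M : ℝ, ∀ ε > (0 : ℝ), ∃ R : ℝ, ∀ s : ℂ,
      s.re ≤ -R → |s.im| ≤ M → ‖y s - z‖ < ε) :
    y t = U t z := by
  set r := z.re with hr_def
  set δ := r/2 with hδ_def
  set q := Real.exp (-(r/2)) with hq_def
  set B := |t.im| * (|z.im| + δ) with hB_def
  set A := Real.exp (t.re * (r/2) + B) with hA_def
  set C := A * q / (1 - q) with hC_def
  have hq0 : 0 < q := Real.exp_pos _
  have hq1 : q < 1 := by rw [hq_def]; exact Real.exp_lt_one_iff.mpr (by linarith)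
  have h1q : (0:ℝ) < 1 - q := by linarith
  have hA0 : 0 < A := Real.exp_pos _
  have hC0 : 0 ≤ C := by positivity
  have hδ0 : 0 < δ := by rw [hδ_def]; linarith
  have hC : C ≤ δ/2 := by
    have : C ≤ r/4 := hsm
    rw [hδ_def]; linarith
  have hCkey : C * q + A * q = C := by
    rw [hC_def]; field_simp; ring
  -- exponential bound
  have hexp : ∀ (j : ℕ) (u : ℂ), ‖u - z‖ ≤ δ →
      ‖Complex.exp ((t - ((j+1:ℕ):ℂ)) * u)‖ ≤ A * q^(j+1) := by
    intro j u hu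
    have hre : |u.re - z.re| ≤ ‖u - z‖ := by
      simpa using Complex.abs_re_le_norm (u - z)
    have him : |u.im - z.im| ≤ ‖u - z‖ := by
      simpa using Complex.abs_im_le_norm (u - z)
    have hure : r/2 ≤ u.re := by
      have h1 := abs_le.mp (hre.trans hu)
      linarith [h1.1]
    have huim : |u.im| ≤ |z.im| + δ := by
      have h2 : |u.im| ≤ |z.im| + |u.im - z.im| := by
        calc |u.im| = |z.im + (u.im - z.im)| := by ring_nf
          _ ≤ |z.im| + |u.im - z.im| := abs_add_le _ _
      linarith [him.trans hu]
    have hmulre : ((t - ((j+1:ℕ):ℂ)) * u).re = (t.re - (j+1)) * u.re - t.im * u.im := by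
      simp only [Complex.mul_re, Complex.sub_re, Complex.sub_im, Complex.natCast_re,
        Complex.natCast_im]
      push_cast
      ring
    rw [Complex.norm_exp, hmulre]
    have h3 : (t.re - ((j:ℝ)+1)) * u.re ≤ (t.re - ((j:ℝ)+1)) * (r/2) :=
      mul_le_mul_of_nonpos_left hure (by push_cast; linarith [Nat.cast_nonneg (α := ℝ) j])
    have h4 : -(t.im * u.im) ≤ B := by
      have h41 : |t.im * u.im| ≤ B := by
        rw [abs_mul, hB_def]
        exact mul_le_mul_of_nonneg_left huim (abs_nonneg _)
      linarith [neg_le_abs (t.im * u.im)]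
    have h5 : A * q^(j+1) = Real.exp ((t.re*(r/2)+B) + ((j+1:ℕ):ℝ) * (-(r/2))) := by
      rw [hA_def, hq_def, ← Real.exp_nat_mul, ← Real.exp_add]
    rw [h5]
    apply Real.exp_le_exp.mpr
    have h6 : (t.re - ((j:ℝ)+1))*(r/2) = t.re*(r/2) - ((j:ℝ)+1)*(r/2) := by ring
    push_cast
    linarith [h3, h4, h6]
  -- claim (a): orbit stays close
  have claim_a : ∀ (m j : ℕ) (w : ℂ), ‖w - z‖ ≤ δ/2 →
      ‖Un m (t - (j:ℕ)) w - w‖ ≤ C * q^j := by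
    intro m
    induction m with
    | zero =>
      intro j w hw
      simp only [Un, sub_self, norm_zero]
      positivity
    | succ m ih =>
      intro j w hw
      have hc : t - ((j:ℕ):ℂ) - 1 = t - ((j+1:ℕ):ℂ) := by push_cast; ring
      rw [Un_succ, hc]
      have h1 : ‖Un m (t - ((j+1:ℕ):ℂ)) w - w‖ ≤ C * q^(j+1) := ih (j+1) w hw
      set u := Un m (t - ((j+1:ℕ):ℂ)) w with hu_def
      have hq_pow : q^(j+1) ≤ 1 := pow_le_one₀ hq0.le hq1.le
      have h2 : ‖u - z‖ ≤ δ := by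
        have h21 : u - z = (u - w) + (w - z) := by ring
        have h22 := norm_add_le (u - w) (w - z)
        rw [← h21] at h22
        have h23 : C * q^(j+1) ≤ C := mul_le_of_le_one_right hC0 hq_pow
        calc ‖u - z‖ ≤ ‖u - w‖ + ‖w - z‖ := h22
          _ ≤ C * q^(j+1) + δ/2 := add_le_add h1 hw
          _ ≤ δ/2 + δ/2 := by linarith
          _ = δ := by ring
      have h3 := hexp j u h2
      have h4 : u + Complex.exp ((t - ((j+1:ℕ):ℂ)) * u) - w
          = (u - w) + Complex.exp ((t - ((j+1:ℕ):ℂ)) * u) := by ring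
      rw [h4]
      calc ‖(u - w) + Complex.exp ((t - ((j+1:ℕ):ℂ)) * u)‖
          ≤ ‖u - w‖ + ‖Complex.exp ((t - ((j+1:ℕ):ℂ)) * u)‖ := norm_add_le _ _
        _ ≤ C * q^(j+1) + A * q^(j+1) := add_le_add h1 h3
        _ = (C * q + A * q) * q^j := by ring
        _ = C * q^j := by rw [hCkey]
  -- claim (b): Lipschitz estimate
  have hfun_nonneg : ∀ i : ℕ, 0 ≤ (‖t‖ + (i:ℝ)) * (A * q^i) := by
    intro i
    have : (0:ℝ) ≤ ‖t‖ + (i:ℝ) := by positivity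
    positivity
  have claim_b : ∀ (m j : ℕ) (w w' : ℂ), ‖w - z‖ ≤ δ/2 → ‖w' - z‖ ≤ δ/2 →
      ‖Un m (t - (j:ℕ)) w - Un m (t - (j:ℕ)) w'‖ ≤
        Real.exp (∑ i ∈ Finset.range m, (‖t‖ + ((j+1+i:ℕ):ℝ)) * (A * q^(j+1+i))) * ‖w - w'‖ := by
    intro m
    induction m with
    | zero =>
      intro j w w' hw hw'
      simp [Un]
    | succ m ih =>
      intro j w w' hw hw'
      have hc : t - ((j:ℕ):ℂ) - 1 = t - ((j+1:ℕ):ℂ) := by push_cast; ring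
      rw [Un_succ, Un_succ, hc]
      set c := t - ((j+1:ℕ):ℂ) with hc_def
      set u := Un m c w with hu_def
      set u' := Un m c w' with hu'_def
      have hball : ∀ x : ℂ, ‖x - z‖ ≤ δ/2 → ‖Un m c x - z‖ ≤ δ := by
        intro x hx
        have h1 : ‖Un m c x - x‖ ≤ C * q^(j+1) := claim_a m (j+1) x hx
        have hq_pow : q^(j+1) ≤ 1 := pow_le_one₀ hq0.le hq1.le
        have h23 : C * q^(j+1) ≤ C := mul_le_of_le_one_right hC0 hq_pow
        have h21 : Un m c x - z = (Un m c x - x) + (x - z) := by ring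
        have h22 := norm_add_le (Un m c x - x) (x - z)
        rw [← h21] at h22
        calc ‖Un m c x - z‖ ≤ ‖Un m c x - x‖ + ‖x - z‖ := h22
          _ ≤ C * q^(j+1) + δ/2 := add_le_add h1 hx
          _ ≤ δ/2 + δ/2 := by linarith
          _ = δ := by ring
      have hu_mem : u ∈ closedBall z δ := by
        rw [mem_closedBall, dist_eq_norm]; exact hball w hw
      have hu'_mem : u' ∈ closedBall z δ := by
        rw [mem_closedBall, dist_eq_norm]; exact hball w' hw'
      have hnormc : ‖c‖ ≤ ‖t‖ + ((j+1:ℕ):ℝ) := by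
        calc ‖c‖ ≤ ‖t‖ + ‖((j+1:ℕ):ℂ)‖ := norm_sub_le _ _
          _ = ‖t‖ + ((j+1:ℕ):ℝ) := by rw [Complex.norm_natCast]
      have hderiv : ∀ x ∈ closedBall z δ, HasDerivWithinAt (fun x => Complex.exp (c * x))
          (Complex.exp (c * x) * c) (closedBall z δ) x := by
        intro x _
        simpa using (((hasDerivAt_id x).const_mul c).cexp).hasDerivWithinAt
      have hbound : ∀ x ∈ closedBall z δ,
          ‖Complex.exp (c * x) * c‖ ≤ A * q^(j+1) * (‖t‖ + ((j+1:ℕ):ℝ)) := by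
        intro x hx
        rw [mem_closedBall, dist_eq_norm] at hx
        rw [norm_mul]
        exact mul_le_mul (hexp j x hx) hnormc (norm_nonneg _) (by positivity)
      have hmv := (convex_closedBall z δ).norm_image_sub_le_of_norm_hasDerivWithin_le
        hderiv hbound hu'_mem hu_mem
      have hih := ih (j+1) w w' hw hw'
      have hL : (0:ℝ) ≤ ‖u - u'‖ := norm_nonneg _
      have hrw : u + Complex.exp (c * u) - (u' + Complex.exp (c * u'))
          = (u - u') + (Complex.exp (c * u) - Complex.exp (c * u')) := by ring
      rw [hrw]
      have hfj : (0:ℝ) ≤ (‖t‖ + ((j+1:ℕ):ℝ)) * (A * q^(j+1)) := hfun_nonneg (j+1)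
      have hstep : ‖(u - u') + (Complex.exp (c * u) - Complex.exp (c * u'))‖
          ≤ (1 + (‖t‖ + ((j+1:ℕ):ℝ)) * (A * q^(j+1))) * ‖u - u'‖ := by
        calc ‖(u - u') + (Complex.exp (c * u) - Complex.exp (c * u'))‖
            ≤ ‖u - u'‖ + ‖Complex.exp (c * u) - Complex.exp (c * u')‖ := norm_add_le _ _
          _ ≤ ‖u - u'‖ + A * q^(j+1) * (‖t‖ + ((j+1:ℕ):ℝ)) * ‖u - u'‖ := by
              exact add_le_add le_rfl hmv
          _ = (1 + (‖t‖ + ((j+1:ℕ):ℝ)) * (A * q^(j+1))) * ‖u - u'‖ := by ring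
      have hexp1 : (1 + (‖t‖ + ((j+1:ℕ):ℝ)) * (A * q^(j+1)))
          ≤ Real.exp ((‖t‖ + ((j+1:ℕ):ℝ)) * (A * q^(j+1))) := by
        have := Real.add_one_le_exp ((‖t‖ + ((j+1:ℕ):ℝ)) * (A * q^(j+1)))
        linarith
      have hih' : ‖u - u'‖ ≤
          Real.exp (∑ i ∈ Finset.range m, (‖t‖ + ((j+1+1+i:ℕ):ℝ)) * (A * q^(j+1+1+i))) * ‖w - w'‖ := hih
      have hsum_eq : ∑ i ∈ Finset.range (m+1), (‖t‖ + ((j+1+i:ℕ):ℝ)) * (A * q^(j+1+i))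
          = (‖t‖ + ((j+1:ℕ):ℝ)) * (A * q^(j+1))
            + ∑ i ∈ Finset.range m, (‖t‖ + ((j+1+1+i:ℕ):ℝ)) * (A * q^(j+1+1+i)) := by
        rw [Finset.sum_range_succ', add_comm]
        congr 1
        · apply Finset.sum_congr rfl
          intro i _
          have h7 : j + 1 + (i + 1) = j + 1 + 1 + i := by omega
          rw [h7]

      calc ‖(u - u') + (Complex.exp (c * u) - Complex.exp (c * u'))‖
          ≤ (1 + (‖t‖ + ((j+1:ℕ):ℝ)) * (A * q^(j+1))) * ‖u - u'‖ := hstep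
        _ ≤ Real.exp ((‖t‖ + ((j+1:ℕ):ℝ)) * (A * q^(j+1))) * ‖u - u'‖ :=
            mul_le_mul_of_nonneg_right hexp1 hL
        _ ≤ Real.exp ((‖t‖ + ((j+1:ℕ):ℝ)) * (A * q^(j+1))) *
            (Real.exp (∑ i ∈ Finset.range m, (‖t‖ + ((j+1+1+i:ℕ):ℝ)) * (A * q^(j+1+1+i))) * ‖w - w'‖) :=
            mul_le_mul_of_nonneg_left hih' (Real.exp_pos _).le
        _ = Real.exp (∑ i ∈ Finset.range (m+1), (‖t‖ + ((j+1+i:ℕ):ℝ)) * (A * q^(j+1+i))) * ‖w - w'‖ := by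
            rw [hsum_eq, Real.exp_add]; ring
  -- summability
  have hsum : Summable (fun i : ℕ => (‖t‖ + (i:ℝ)) * (A * q^i)) := by
    have h1 : Summable (fun i : ℕ => q^i) := summable_geometric_of_lt_one hq0.le hq1
    have h2 : Summable (fun i : ℕ => (i:ℝ) * q^i) := by
      have := summable_pow_mul_geometric_of_norm_lt_one (R := ℝ) 1
        (r := q) (by rwa [Real.norm_eq_abs, abs_of_pos hq0])
      simpa using this
    have h3 := (h1.mul_left (‖t‖ * A)).add (h2.mul_left A)
    apply h3.congr
    intro i
    ring
  set T : ℝ := ∑' i : ℕ, (‖t‖ + (i:ℝ)) * (A * q^i) with hT_def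
  have hT : ∀ m : ℕ, ∑ i ∈ Finset.range m, (‖t‖ + ((0+1+i:ℕ):ℝ)) * (A * q^(0+1+i)) ≤ T := by
    intro m
    have hinj : Function.Injective (fun i : ℕ => 0+1+i) := fun a b h => by simpa using h
    have hshift : Summable (fun i : ℕ => (‖t‖ + ((0+1+i:ℕ):ℝ)) * (A * q^(0+1+i))) :=
      hsum.comp_injective hinj
    have h1 : ∑ i ∈ Finset.range m, (‖t‖ + ((0+1+i:ℕ):ℝ)) * (A * q^(0+1+i))
        ≤ ∑' i : ℕ, (‖t‖ + ((0+1+i:ℕ):ℝ)) * (A * q^(0+1+i)) :=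
      Summable.sum_le_tsum _ (fun i _ => hfun_nonneg _) hshift
    have h2 : ∑' i : ℕ, (‖t‖ + ((0+1+i:ℕ):ℝ)) * (A * q^(0+1+i)) ≤ T :=
      Summable.tsum_le_tsum_of_inj _ hinj (fun c _ => hfun_nonneg c) (fun i => le_rfl) hshift hsum
    linarith
  -- y (t - m) tends to z
  have hyt : Tendsto (fun m : ℕ => y (t - (m:ℕ))) atTop (𝓝 z) := by
    rw [Metric.tendsto_atTop]
    intro ε hε
    obtain ⟨R, hR⟩ := hy_lim |t.im| ε hε
    obtain ⟨N, hN⟩ := exists_nat_ge (R + t.re)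
    refine ⟨N, fun m hm => ?_⟩
    rw [dist_eq_norm]
    apply hR
    · simp only [Complex.sub_re, Complex.natCast_re]
      have h1 : (N:ℝ) ≤ (m:ℝ) := Nat.cast_le.mpr hm
      linarith
    · simp [Complex.sub_im]
  have hev : ∀ᶠ m : ℕ in atTop, ‖y (t - (m:ℕ)) - z‖ ≤ δ/2 := by
    obtain ⟨N, hN⟩ := Metric.tendsto_atTop.mp hyt (δ/2) (by linarith)
    filter_upwards [eventually_ge_atTop N] with m hm
    have := hN m hm
    rw [dist_eq_norm] at this
    linarith
  have hnorm0 : Tendsto (fun m : ℕ => ‖y (t - (m:ℕ)) - z‖) atTop (𝓝 0) :=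
    tendsto_zero_iff_norm_tendsto_zero.mp (tendsto_sub_nhds_zero_iff.mpr hyt)
  have hdiff : Tendsto (fun m : ℕ => Un m t (y (t - (m:ℕ))) - Un m t z) atTop (𝓝 0) := by
    refine squeeze_zero_norm' (a := fun m : ℕ => Real.exp T * ‖y (t - (m:ℕ)) - z‖) ?_ ?_
    · filter_upwards [hev] with m hm
      have hb := claim_b m 0 (y (t - (m:ℕ))) z hm (by simp; linarith)
      simp only [Nat.cast_zero, sub_zero] at hb
      calc ‖Un m t (y (t - (m:ℕ))) - Un m t z‖
          ≤ Real.exp (∑ i ∈ Finset.range m, (‖t‖ + ((0+1+i:ℕ):ℝ)) * (A * q^(0+1+i)))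
            * ‖y (t - (m:ℕ)) - z‖ := hb
        _ ≤ Real.exp T * ‖y (t - (m:ℕ)) - z‖ :=
            mul_le_mul_of_nonneg_right (Real.exp_le_exp.mpr (hT m)) (norm_nonneg _)
    · simpa using tendsto_const_nhds.mul hnorm0
  have hlim1 : Tendsto (fun m : ℕ => Un m t (y (t - (m:ℕ)))) atTop (𝓝 (U t z)) := by
    have h1 := hdiff.add (hU t z hz)
    simp only [sub_add_cancel, zero_add] at h1
    exact h1
  have hconst : (fun m : ℕ => Un m t (y (t - (m:ℕ)))) = fun _ => y t := by
    funext m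
    exact y_Un y hy_eq m t
  rw [hconst] at hlim1
  exact tendsto_nhds_unique tendsto_const_nhds hlim1

theorem stmt_16 (z : ℂ) (hz : 0 < z.re) (U : ℂ → ℂ → ℂ)
    (hU : ∀ (s w : ℂ), 0 < w.re → Tendsto (fun n => Un n s w) atTop (nhds (U s w)))
    (y : ℂ → ℂ) (hy_diff : Differentiable ℂ y)
    (hy_eq : ∀ s : ℂ, y (s + 1) - y s = Complex.exp (s * y s))
    (hy_lim : ∀ M : ℝ, ∀ ε > (0 : ℝ), ∃ R : ℝ, ∀ s : ℂ,
      s.re ≤ -R → |s.im| ≤ M → ‖y s - z‖ < ε) :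
    ∀ s : ℂ, y s = U s z := by
  intro s
  have hq0 : (0:ℝ) < Real.exp (-(z.re/2)) := Real.exp_pos _
  have hq1 : Real.exp (-(z.re/2)) < 1 := Real.exp_lt_one_iff.mpr (by linarith)
  have h1q : (0:ℝ) < 1 - Real.exp (-(z.re/2)) := by linarith
  obtain ⟨k, hk1, hk2⟩ : ∃ k : ℕ, s.re - k ≤ 0 ∧
      Real.exp ((s.re - k) * (z.re/2) + |s.im| * (|z.im| + z.re/2)) * Real.exp (-(z.re/2))
        / (1 - Real.exp (-(z.re/2))) ≤ z.re/4 := by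
    have hb : Tendsto (fun k : ℕ => (s.re - k) * (z.re/2) + |s.im| * (|z.im| + z.re/2))
        atTop atBot := by
      apply tendsto_atBot_add_const_right
      apply Tendsto.atBot_mul_const (by linarith : (0:ℝ) < z.re/2)
      apply tendsto_atBot_add_const_left
      exact tendsto_neg_atBot_iff.mpr tendsto_natCast_atTop_atTop
    have he : Tendsto (fun k : ℕ =>
        Real.exp ((s.re - k) * (z.re/2) + |s.im| * (|z.im| + z.re/2)) * Real.exp (-(z.re/2))
          / (1 - Real.exp (-(z.re/2)))) atTop (𝓝 0) := by
      have h0 := Real.tendsto_exp_atBot.comp hb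
      have h1 := (h0.mul_const (Real.exp (-(z.re/2)))).div_const (1 - Real.exp (-(z.re/2)))
      simpa [Function.comp] using h1
    have h1 := he.eventually (gt_mem_nhds (by linarith : (0:ℝ) < z.re/4))
    have h2 : ∀ᶠ k : ℕ in atTop, s.re ≤ (k:ℝ) :=
      tendsto_natCast_atTop_atTop.eventually_ge_atTop s.re
    obtain ⟨k, hk1, hk2⟩ := (h1.and h2).exists
    exact ⟨k, by linarith, hk1.le⟩
  have hyk : y (s - (k:ℂ)) = U (s - (k:ℂ)) z := by
    apply key_s16 z hz (s - (k:ℂ)) (by simpa using hk1) ?_ U hU y hy_eq hy_lim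
    simpa [Complex.sub_re, Complex.sub_im] using hk2
  have h2 : Tendsto (fun m : ℕ => Un (k + m) s z) atTop (𝓝 (U s z)) := by
    have h21 := (hU s z hz).comp (tendsto_add_atTop_nat k)
    have h22 : (fun m : ℕ => Un (k + m) s z) = (fun n => Un n s z) ∘ (fun n => n + k) := by
      funext m
      simp [Function.comp, add_comm]
    rw [h22]
    exact h21
  have h3 : Tendsto (fun m : ℕ => Un (k + m) s z) atTop (𝓝 (Un k s (U (s - (k:ℂ)) z))) := by
    have hcont := (Un_cont k s).tendsto (U (s - (k:ℂ)) z)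
    have h31 := hcont.comp (hU (s - (k:ℂ)) z hz)
    exact Tendsto.congr (fun m => (Un_comp k m s z).symm) h31
  have h4 : U s z = Un k s (U (s - (k:ℂ)) z) := tendsto_nhds_unique h2 h3
  have h5 : Un k s (y (s - (k:ℂ))) = y s := y_Un y hy_eq k s
  rw [← h5, hyk, ← h4]
end
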